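/- arXiv:1610.07888 — 13 statements merged into one kernel-verified Lean document; each statement's English description precedes it below -/
import Mathlib

section
/- Let G be a finite digraph without loops and multiple arcs having at least one arc, with signless Laplacian Q(G) = D(G) + A(G), where D(G) is the diagonal matrix of outdegrees. Then the spectral radius q(G) of Q(G) satisfies q(G) ≤ max over arcs (v_i, v_j) ∈ E(G) of (d_i^+ + d_j^+). -/
open Matrix Finset

/-- Spectral radius of a complex square matrix: the largest modulus of its eigenvalues. -/
noncomputable def specRad {n : ℕ} (M : Matrix (Fin n) (Fin n) ℂ) : ℝ :=
  sSup {x : ℝ | ∃ μ ∈ spectrum ℂ M, x = ‖μ‖}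

/-- Spectral radius of a real square matrix (via its complex eigenvalues). -/
noncomputable def specRadR {n : ℕ} (M : Matrix (Fin n) (Fin n) ℝ) : ℝ :=
  specRad (M.map Complex.ofReal)

/-- Adjacency matrix of a digraph given by its arc relation. -/
def adjM {n : ℕ} (E : Fin n → Fin n → Prop) [DecidableRel E] :
    Matrix (Fin n) (Fin n) ℝ := fun i j => if E i j then 1 else 0

/-- Outdegree of vertex `i`. -/
def outdeg {n : ℕ} (E : Fin n → Fin n → Prop) [DecidableRel E] (i : Fin n) : ℕ :=
  (Finset.univ.filter (fun j => E i j)).card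

/-- Signless Laplacian `Q(G) = D(G) + A(G)`. -/
noncomputable def Qmat {n : ℕ} (E : Fin n → Fin n → Prop) [DecidableRel E] :
    Matrix (Fin n) (Fin n) ℝ :=
  Matrix.diagonal (fun i => (outdeg E i : ℝ)) + adjM E

/-- Signless Laplacian spectral radius `q(G)`. -/
noncomputable def qG {n : ℕ} (E : Fin n → Fin n → Prop) [DecidableRel E] : ℝ :=
  specRadR (Qmat E)

/-- Average 2-outdegree `m_i^+`. -/
noncomputable def m2 {n : ℕ} (E : Fin n → Fin n → Prop) [DecidableRel E] (i : Fin n) : ℝ :=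
  (∑ j ∈ Finset.univ.filter (fun j => E i j), (outdeg E j : ℝ)) / (outdeg E i : ℝ)

/-- The finset of arcs of the digraph. -/
def arcs {n : ℕ} (E : Fin n → Fin n → Prop) [DecidableRel E] : Finset (Fin n × Fin n) :=
  Finset.univ.filter (fun p => E p.1 p.2)

/-- Strong connectivity of a digraph. -/
def StrongConn {n : ℕ} (E : Fin n → Fin n → Prop) : Prop :=
  ∀ i j : Fin n, Relation.ReflTransGen E i j

/-- Irreducibility of a square matrix: the digraph of nonzero entries is strongly connected. -/
def MatIrred {n : ℕ} {α : Type*} [Zero α] (M : Matrix (Fin n) (Fin n) α) : Prop :=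
  ∀ i j : Fin n, i ≠ j → Relation.TransGen (fun a b => M a b ≠ 0) i j

theorem eig {n : ℕ} (M : Matrix (Fin n) (Fin n) ℂ) (μ : ℂ) (h : μ ∈ spectrum ℂ M) :
    ∃ x : Fin n → ℂ, x ≠ 0 ∧ M *ᵥ x = μ • x := by
  rw [spectrum.mem_iff] at h
  rw [Matrix.isUnit_iff_isUnit_det, isUnit_iff_ne_zero, not_not] at h
  obtain ⟨v, hv0, hv⟩ := (Matrix.exists_mulVec_eq_zero_iff).2 h
  refine ⟨v, hv0, ?_⟩
  rw [Matrix.sub_mulVec, sub_eq_zero] at hv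
  rw [← hv]
  ext i
  simp [Matrix.algebraMap_eq_diagonal, Matrix.mulVec_diagonal]

set_option maxHeartbeats 1000000 in
/-- `q(G) ≤ max{d_i⁺ + d_j⁺ : (v_i, v_j) ∈ E(G)}`. -/
theorem stmt_2 {n : ℕ} (E : Fin n → Fin n → Prop) [DecidableRel E]
    (hloop : ∀ i, ¬ E i i) (hsc : StrongConn E) (harcs : (arcs E).Nonempty) :
    qG E ≤ (arcs E).sup' harcs (fun p => (outdeg E p.1 : ℝ) + (outdeg E p.2 : ℝ)) := by
  obtain ⟨⟨a, b⟩, hab⟩ := id harcs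
  have hab' : E a b := by simpa [arcs] using hab
  have hne : a ≠ b := fun h => hloop a (h ▸ hab')
  -- every vertex has positive outdegree
  have hdeg : ∀ i, 0 < outdeg E i := by
    intro i
    have ht : ∃ t : Fin n, t ≠ i := by
      by_cases h : i = a
      · exact ⟨b, fun hh => hne (h ▸ hh.symm)⟩
      · exact ⟨a, fun hh => h hh.symm⟩
    obtain ⟨t, hti⟩ := ht
    rcases (hsc i t).cases_head with h | ⟨c, hic, _⟩
    · exact absurd h.symm hti
    · exact Finset.card_pos.2 ⟨c, by simp [hic]⟩
  have hM0 : (0 : ℝ) ≤ (arcs E).sup' harcs (fun p => (outdeg E p.1 : ℝ) + (outdeg E p.2 : ℝ)) := by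
    refine le_trans ?_ (Finset.le_sup' _ hab)
    positivity
  refine Real.sSup_le ?_ hM0
  rintro x ⟨μ, hμ, rfl⟩
  obtain ⟨v, hv0, hv⟩ := eig _ μ hμ
  set d : Fin n → ℝ := fun i => (outdeg E i : ℝ) with hd
  have hdpos : ∀ i, (0 : ℝ) < d i := by
    intro i; simp only [hd]; exact_mod_cast hdeg i
  set f : Fin n → ℝ := fun i => ‖v i‖ / d i with hf
  have hn : (Finset.univ : Finset (Fin n)).Nonempty := ⟨a, mem_univ a⟩
  obtain ⟨i, -, hmax⟩ := Finset.exists_max_image Finset.univ f hn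
  have hmax' : ∀ k, f k ≤ f i := fun k => hmax k (mem_univ k)
  have hfi : 0 < f i := by
    obtain ⟨k, hk⟩ := Function.ne_iff.1 hv0
    have hk' : 0 < f k := by
      rw [hf]
      exact div_pos (by simpa using hk) (hdpos k)
    exact lt_of_lt_of_le hk' (hmax' k)
  have hvi : ‖v i‖ = f i * d i := by
    rw [hf]; rw [div_mul_cancel₀ _ (hdpos i).ne']
  -- row equation
  have hrow : (μ - (d i : ℂ)) * v i = ∑ j ∈ Finset.univ.filter (fun j => E i j), v j := by
    have h1 := congrFun hv i
    simp only [Pi.smul_apply, smul_eq_mul] at h1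
    have h2 : ((Qmat E).map Complex.ofReal *ᵥ v) i
        = (d i : ℂ) * v i + ∑ j ∈ Finset.univ.filter (fun j => E i j), v j := by
      rw [Matrix.mulVec, dotProduct]
      have key : ∀ j : Fin n, ((Qmat E).map Complex.ofReal) i j * v j
          = (if j = i then (d i : ℂ) * v j else 0) + (if E i j then v j else 0) := by
        intro j
        simp only [Matrix.map_apply, Qmat, Matrix.add_apply, Matrix.diagonal_apply, adjM, hd]
        by_cases h : i = j
        · subst h
          simp [hloop i]
        · by_cases h2 : E i j <;> simp [h, h2, Ne.symm h]
      rw [Finset.sum_congr rfl (fun j _ => key j), Finset.sum_add_distrib,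
        Finset.sum_ite_eq' Finset.univ i, ← Finset.sum_filter]
      simp
    rw [h2] at h1
    rw [sub_mul, ← h1]
    ring
  -- take absolute values
  have habs : (‖μ‖ - d i) * (f i * d i)
      ≤ (∑ j ∈ Finset.univ.filter (fun j => E i j), d j) * f i := by
    have h1 : ‖(μ - (d i : ℂ))‖ * ‖v i‖
        ≤ ∑ j ∈ Finset.univ.filter (fun j => E i j), ‖v j‖ := by
      rw [← norm_mul, hrow]
      exact norm_sum_le _ _
    have h2 : ∑ j ∈ Finset.univ.filter (fun j => E i j), ‖v j‖
        ≤ ∑ j ∈ Finset.univ.filter (fun j => E i j), d j * f i := by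
      refine Finset.sum_le_sum fun j _ => ?_
      have hj : f j ≤ f i := hmax' j
      have hj2 := mul_le_mul_of_nonneg_left hj (le_of_lt (hdpos j))
      calc ‖v j‖ = d j * f j := by
            rw [hf, mul_comm, div_mul_cancel₀ _ (hdpos j).ne']
        _ ≤ d j * f i := hj2
    have h3 : ‖μ‖ - d i ≤ ‖μ - (d i : ℂ)‖ := by
      have h := norm_sub_norm_le μ ((d i : ℂ))
      simpa [Complex.norm_real, Real.norm_eq_abs, abs_of_nonneg (hdpos i).le] using h
    calc (‖μ‖ - d i) * (f i * d i)
        ≤ ‖μ - (d i : ℂ)‖ * (f i * d i) := by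
          apply mul_le_mul_of_nonneg_right h3
          positivity
      _ = ‖μ - (d i : ℂ)‖ * ‖v i‖ := by rw [hvi]
      _ ≤ ∑ j ∈ Finset.univ.filter (fun j => E i j), ‖v j‖ := h1
      _ ≤ ∑ j ∈ Finset.univ.filter (fun j => E i j), d j * f i := h2
      _ = (∑ j ∈ Finset.univ.filter (fun j => E i j), d j) * f i := by rw [Finset.sum_mul]
  -- pick max-outdegree out-neighbour
  have hNi : (Finset.univ.filter (fun j => E i j)).Nonempty :=
    Finset.card_pos.1 (hdeg i)
  obtain ⟨j0, hj0mem, hj0⟩ := Finset.exists_max_image _ d hNi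
  have hj0E : E i j0 := by simpa using hj0mem
  have hsum : ∑ j ∈ Finset.univ.filter (fun j => E i j), d j ≤ d i * d j0 := by
    calc ∑ j ∈ Finset.univ.filter (fun j => E i j), d j
        ≤ ∑ _j ∈ Finset.univ.filter (fun j => E i j), d j0 :=
          Finset.sum_le_sum fun j hj => hj0 j hj
      _ = d i * d j0 := by rw [Finset.sum_const, nsmul_eq_mul]; rfl
  -- conclude
  have hfinal : ‖μ‖ ≤ d i + d j0 := by
    have hP : 0 < f i * d i := mul_pos hfi (hdpos i)
    have h4 : (‖μ‖ - d i) * (f i * d i) ≤ d j0 * (f i * d i) := by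
      calc (‖μ‖ - d i) * (f i * d i)
          ≤ (∑ j ∈ Finset.univ.filter (fun j => E i j), d j) * f i := habs
        _ ≤ (d i * d j0) * f i := mul_le_mul_of_nonneg_right hsum (le_of_lt hfi)
        _ = d j0 * (f i * d i) := by ring
    have h5 := le_of_mul_le_mul_right h4 hP
    linarith
  refine le_trans hfinal ?_
  have hmem : ((i, j0) : Fin n × Fin n) ∈ arcs E := by simp [arcs, hj0E]
  exact Finset.le_sup' (f := fun p => (outdeg E p.1 : ℝ) + (outdeg E p.2 : ℝ)) hmem
end

section
/- Let G be a digraph with signless Laplacian Q(G) = D(G) + A(G). Then q(G) ≤ max over vertices v_i of (d_i^+ + m_i^+), where m_i^+ = (Σ_{v_j: (v_i,v_j)∈E(G)} d_j^+)/d_i^+ is the average 2-outdegree of v_i. -/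
open Matrix Finset

lemma exists_eigvec {n : ℕ} (M : Matrix (Fin n) (Fin n) ℂ) (μ : ℂ) (h : μ ∈ spectrum ℂ M) :
    ∃ v : Fin n → ℂ, v ≠ 0 ∧ M.mulVec v = μ • v := by
  rw [← AlgEquiv.spectrum_eq (Matrix.toLinAlgEquiv' (R := ℂ) (n := Fin n)),
    ← Module.End.hasEigenvalue_iff_mem_spectrum] at h
  obtain ⟨v, hv⟩ := h.exists_hasEigenvector
  exact ⟨v, hv.2, by simpa [Matrix.toLinAlgEquiv'_apply] using hv.apply_eq_smul⟩

set_option maxHeartbeats 1000000 in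
/-- `q(G) ≤ max{d_i⁺ + m_i⁺ : v_i ∈ V(G)}`. -/
theorem stmt_3 {n : ℕ} (hn : 0 < n) (E : Fin n → Fin n → Prop) [DecidableRel E]
    (hloop : ∀ i, ¬ E i i) (hdeg : ∀ i, 0 < outdeg E i) :
    qG E ≤ Finset.univ.sup' ⟨⟨0, hn⟩, Finset.mem_univ _⟩
      (fun i => (outdeg E i : ℝ) + m2 E i) := by
  set d : Fin n → ℝ := fun i => (outdeg E i : ℝ) with hd
  have hdpos : ∀ i, 0 < d i := fun i => by
    show (0:ℝ) < (outdeg E i : ℝ); exact_mod_cast hdeg i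
  have hm2nn : ∀ i, 0 ≤ m2 E i := fun i => by
    apply div_nonneg _ (le_of_lt (hdpos i))
    exact Finset.sum_nonneg fun j _ => Nat.cast_nonneg _
  have hBnn : 0 ≤ Finset.univ.sup' ⟨⟨0, hn⟩, Finset.mem_univ _⟩
      (fun i => (outdeg E i : ℝ) + m2 E i) := by
    refine le_trans ?_ (Finset.le_sup' (fun i => (outdeg E i : ℝ) + m2 E i) (Finset.mem_univ ⟨0, hn⟩))
    exact add_nonneg (Nat.cast_nonneg _) (hm2nn ⟨0, hn⟩)
  have hQnn : ∀ i j, 0 ≤ Qmat E i j := by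
    intro i j
    simp only [Qmat, Matrix.add_apply, Matrix.diagonal_apply, adjM]
    positivity
  have hrow : ∀ i, ∑ j, Qmat E i j * d j = d i * (d i + m2 E i) := by
    intro i
    have h1 : ∀ j, Qmat E i j * d j
        = (if i = j then d i * d i else 0) + (if E i j then d j else 0) := by
      intro j
      by_cases h1 : i = j
      · subst h1; simp [Qmat, Matrix.add_apply, Matrix.diagonal_apply, adjM, hloop i, hd]
      · by_cases h2 : E i j <;>
          simp [Qmat, Matrix.add_apply, Matrix.diagonal_apply, adjM, h1, h2]
    rw [Finset.sum_congr rfl fun j _ => h1 j, Finset.sum_add_distrib,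
      Finset.sum_ite_eq (Finset.univ) i (fun _ => d i * d i), ← Finset.sum_filter]
    have hm : m2 E i * d i = ∑ j ∈ Finset.univ.filter (fun j => E i j), d j := by
      rw [m2, div_mul_cancel₀]
      exact ne_of_gt (hdpos i)
    simp only [Finset.mem_univ, if_true]
    rw [← hm]; ring
  apply Real.sSup_le _ hBnn
  rintro x ⟨μ, hμ, rfl⟩
  obtain ⟨v, hv0, heq⟩ := exists_eigvec _ μ hμ
  obtain ⟨i, -, hi⟩ := Finset.exists_max_image Finset.univ
    (fun j => ‖v j‖ / d j) ⟨⟨0, hn⟩, Finset.mem_univ _⟩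
  obtain ⟨k, hk⟩ := Function.ne_iff.mp hv0
  have hfk : 0 < ‖v k‖ / d k :=
    div_pos (by simpa using hk) (hdpos k)
  have hfi : 0 < ‖v i‖ / d i := lt_of_lt_of_le hfk (hi k (Finset.mem_univ k))
  have hvi : 0 < ‖v i‖ := by
    by_contra h
    push_neg at h
    rw [le_antisymm h (norm_nonneg _)] at hfi
    simp at hfi
  have heqi : ∑ j, ((Qmat E).map Complex.ofReal) i j * v j = μ * v i := congrFun heq i
  have key : ‖μ‖ * ‖v i‖ ≤ ‖v i‖ * (d i + m2 E i) := by
    have hdine := ne_of_gt (hdpos i)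
    calc ‖μ‖ * ‖v i‖ = ‖μ * v i‖ := (norm_mul _ _).symm
      _ = ‖∑ j, ((Qmat E).map Complex.ofReal) i j * v j‖ := by rw [heqi]
      _ ≤ ∑ j, ‖((Qmat E).map Complex.ofReal) i j * v j‖ :=
          norm_sum_le _ _
      _ = ∑ j, Qmat E i j * ‖v j‖ := by
          refine Finset.sum_congr rfl fun j _ => ?_
          rw [norm_mul]
          congr 1
          rw [Matrix.map_apply, Complex.norm_real, Real.norm_eq_abs, abs_of_nonneg (hQnn i j)]
      _ ≤ ∑ j, Qmat E i j * (d j * (‖v i‖ / d i)) := by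
          refine Finset.sum_le_sum fun j _ => ?_
          apply mul_le_mul_of_nonneg_left _ (hQnn i j)
          have := (div_le_iff₀ (hdpos j)).mp (hi j (Finset.mem_univ j))
          linarith
      _ = (‖v i‖ / d i) * ∑ j, Qmat E i j * d j := by
          rw [Finset.mul_sum]; exact Finset.sum_congr rfl fun j _ => by ring
      _ = (‖v i‖ / d i) * (d i * (d i + m2 E i)) := by rw [hrow i]
      _ = ‖v i‖ * (d i + m2 E i) := by
          field_simp
  have hfin : ‖μ‖ ≤ d i + m2 E i :=
    (mul_le_mul_iff_of_pos_right hvi).mp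
      (by linarith : ‖μ‖ * ‖v i‖ ≤ (d i + m2 E i) * ‖v i‖)
  exact hfin.trans (Finset.le_sup' (fun i => (outdeg E i : ℝ) + m2 E i) (Finset.mem_univ i))
end

section
/- Let G be a strongly connected digraph with n ≥ 3 vertices, m arcs, maximum outdegree Δ⁺ and minimum outdegree δ⁺. Then q(G) ≤ max{ Δ⁺ + δ⁺ − 1 + (m − δ⁺(n−1))/Δ⁺ , δ⁺ + 1 + (m − δ⁺(n−1))/2 }. -/
open Matrix Finset

lemma spec_bound {n : ℕ} (M : Matrix (Fin n) (Fin n) ℝ) (w : Fin n → ℝ)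
    (hw : ∀ i, 0 < w i) (R : ℝ) (hM : ∀ i j, 0 ≤ M i j)
    (hR : ∀ i, ∑ j, M i j * w j ≤ R * w i) :
    ∀ μ ∈ spectrum ℂ (M.map Complex.ofReal), ‖μ‖ ≤ R := by
  intro μ hμ
  set Mc := M.map Complex.ofReal with hMc
  have h1 : ¬ IsUnit (algebraMap ℂ (Matrix (Fin n) (Fin n) ℂ) μ - Mc) := spectrum.mem_iff.mp hμ
  have hdet : (algebraMap ℂ (Matrix (Fin n) (Fin n) ℂ) μ - Mc).det = 0 := by
    by_contra h
    exact h1 ((Matrix.isUnit_iff_isUnit_det _).mpr (isUnit_iff_ne_zero.mpr h))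
  obtain ⟨v, hv0, hv⟩ := (Matrix.exists_mulVec_eq_zero_iff).mpr hdet
  have heig : Mc.mulVec v = μ • v := by
    rw [sub_mulVec, sub_eq_zero] at hv
    rw [← hv, Algebra.algebraMap_eq_smul_one, smul_mulVec, one_mulVec]
  obtain ⟨i0, hi0⟩ := Function.ne_iff.mp hv0
  have hi0' : v i0 ≠ 0 := hi0
  obtain ⟨u, -, hu⟩ := Finset.exists_max_image Finset.univ
    (fun i => ‖v i‖ / w i) ⟨i0, Finset.mem_univ i0⟩
  set c := ‖v u‖ / w u with hc
  have hcpos : 0 < c := lt_of_lt_of_le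
    (div_pos (by simpa using (norm_pos_iff.mpr hi0')) (hw i0))
    (hu i0 (Finset.mem_univ i0))
  have hbound : ∀ j, ‖v j‖ ≤ c * w j := fun j =>
    (div_le_iff₀ (hw j)).mp (hu j (Finset.mem_univ j))
  have hvu : ‖v u‖ = c * w u := by
    rw [hc, div_mul_cancel₀ _ (hw u).ne']
  have key : ‖μ‖ * (c * w u) ≤ R * (c * w u) := by
    have h2 : (Mc.mulVec v) u = μ * v u := by rw [heig]; rfl
    have hmv : (Mc.mulVec v) u = ∑ j, Mc u j * v j := by
      simp [Matrix.mulVec, dotProduct]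
    have h3 : ‖μ * v u‖ ≤ ∑ j, M u j * ‖v j‖ := by
      rw [← h2, hmv]
      refine le_trans (norm_sum_le _ _) (le_of_eq ?_)
      refine Finset.sum_congr rfl fun j _ => ?_
      rw [norm_mul]
      congr 1
      simp [hMc, Matrix.map_apply, Complex.norm_real, Real.norm_eq_abs, abs_of_nonneg (hM u j)]
    have h4 : ∑ j, M u j * ‖v j‖ ≤ c * ∑ j, M u j * w j := by
      rw [Finset.mul_sum]
      refine Finset.sum_le_sum fun j _ => ?_
      calc M u j * ‖v j‖ ≤ M u j * (c * w j) :=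
            mul_le_mul_of_nonneg_left (hbound j) (hM u j)
        _ = c * (M u j * w j) := by ring
    calc ‖μ‖ * (c * w u) = ‖μ * v u‖ := by
          rw [norm_mul, hvu]
      _ ≤ c * ∑ j, M u j * w j := le_trans h3 h4
      _ ≤ c * (R * w u) := mul_le_mul_of_nonneg_left (hR u) (le_of_lt hcpos)
      _ = R * (c * w u) := by ring
  exact le_of_mul_le_mul_right key (mul_pos hcpos (hw u))

/-- `q(G) ≤ max{Δ⁺+δ⁺−1+(m−δ⁺(n−1))/Δ⁺, δ⁺+1+(m−δ⁺(n−1))/2}`. -/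
theorem stmt_4 {n : ℕ} (hn : 3 ≤ n) (E : Fin n → Fin n → Prop) [DecidableRel E]
    (hloop : ∀ i, ¬ E i i) (hsc : StrongConn E)
    (m Δ δ : ℕ) (hm : m = ∑ i, outdeg E i)
    (hΔ : IsGreatest (Set.range (outdeg E)) Δ)
    (hδ : IsLeast (Set.range (outdeg E)) δ) :
    qG E ≤ max ((Δ : ℝ) + δ - 1 + ((m : ℝ) - δ * (n - 1)) / Δ)
              ((δ : ℝ) + 1 + ((m : ℝ) - δ * (n - 1)) / 2) := by
  classical
  set t : ℝ := (m:ℝ) - δ * ((n:ℝ) - 1) with ht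
  -- every vertex has outdegree ≥ 1
  have hd1 : ∀ i, 1 ≤ outdeg E i := by
    intro i
    have ha : (⟨0, by omega⟩ : Fin n) ≠ (⟨1, by omega⟩ : Fin n) := by
      intro h; simpa using congrArg Fin.val h
    obtain ⟨j, hji⟩ : ∃ j : Fin n, j ≠ i := by
      by_cases h : (⟨0, by omega⟩ : Fin n) = i
      · exact ⟨⟨1, by omega⟩, by rw [← h]; exact (Ne.symm ha)⟩
      · exact ⟨⟨0, by omega⟩, h⟩
    rcases (hsc i j).cases_head with h | ⟨c, hc, -⟩
    · exact absurd h.symm hji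
    · exact Finset.card_pos.mpr ⟨c, Finset.mem_filter.mpr ⟨Finset.mem_univ _, hc⟩⟩
  have hdΔ : ∀ i, outdeg E i ≤ Δ := fun i => hΔ.2 ⟨i, rfl⟩
  have hδd : ∀ i, δ ≤ outdeg E i := fun i => hδ.2 ⟨i, rfl⟩
  have hδ1 : 1 ≤ δ := by obtain ⟨i, hi⟩ := hδ.1; rw [← hi]; exact hd1 i
  have hΔδ : δ ≤ Δ := by obtain ⟨i, hi⟩ := hΔ.1; rw [← hi]; exact hi ▸ hδd i
  -- m ≥ Δ + (n-1)δ
  have hmge : Δ + (n-1)*δ ≤ m := by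
    obtain ⟨u, hu⟩ := hΔ.1
    have h1 : m = outdeg E u + ∑ i ∈ Finset.univ.erase u, outdeg E i := by
      rw [hm, ← Finset.add_sum_erase _ _ (Finset.mem_univ u)]
    have h2 : (Finset.univ.erase u).card * δ ≤ ∑ i ∈ Finset.univ.erase u, outdeg E i := by
      calc (Finset.univ.erase u).card * δ = ∑ _i ∈ Finset.univ.erase u, δ := by
            rw [Finset.sum_const, smul_eq_mul]
        _ ≤ _ := Finset.sum_le_sum fun i _ => hδd i
    have h3 : (Finset.univ.erase u).card = n - 1 := by
      rw [Finset.card_erase_of_mem (Finset.mem_univ u), Finset.card_univ, Fintype.card_fin]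
    rw [h3] at h2
    omega
  have htΔ : (Δ:ℝ) ≤ t := by
    have := hmge
    have hn1 : ((n-1:ℕ):ℝ) = (n:ℝ) - 1 := by
      push_cast [Nat.cast_sub (by omega : 1 ≤ n)]; ring
    have : ((Δ + (n-1)*δ : ℕ) : ℝ) ≤ (m:ℝ) := by exact_mod_cast this
    push_cast [hn1] at this
    rw [ht]; linarith
  -- neighborhood degree-sum bounds
  have hcardN : ∀ i : Fin n, (Finset.univ.filter (fun j => E i j)).card = outdeg E i :=
    fun i => rfl
  have hNle : ∀ i : Fin n, outdeg E i ≤ n - 1 := by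
    intro i
    have hsub : Finset.univ.filter (fun j => E i j) ⊆ Finset.univ.erase i := by
      intro j hj
      rcases Finset.mem_filter.mp hj with ⟨-, hEij⟩
      exact Finset.mem_erase.mpr ⟨fun h => hloop i (h ▸ hEij), Finset.mem_univ j⟩
    have := Finset.card_le_card hsub
    rwa [Finset.card_erase_of_mem (Finset.mem_univ i), Finset.card_univ, Fintype.card_fin] at this
  have hNsumNat : ∀ i : Fin n,
      (∑ j ∈ Finset.univ.filter (fun j => E i j), outdeg E j)
        + outdeg E i + (n - 1 - outdeg E i) * δ ≤ m := by
    intro i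
    set s : Finset (Fin n) := insert i (Finset.univ.filter (fun j => E i j)) with hs
    have hins : i ∉ Finset.univ.filter (fun j => E i j) := by
      simp [hloop i]
    have hcards : s.card = outdeg E i + 1 := by
      rw [hs, Finset.card_insert_of_notMem hins, hcardN]
    have hsplit : m = ∑ j ∈ s, outdeg E j + ∑ j ∈ Finset.univ \ s, outdeg E j := by
      rw [hm, ← Finset.sum_sdiff (Finset.subset_univ s)]; ring
    have hsum_s : ∑ j ∈ s, outdeg E j
        = outdeg E i + ∑ j ∈ Finset.univ.filter (fun j => E i j), outdeg E j := by
      rw [hs, Finset.sum_insert hins]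
    have hrest : (n - 1 - outdeg E i) * δ ≤ ∑ j ∈ Finset.univ \ s, outdeg E j := by
      have hcard : (Finset.univ \ s).card = n - (outdeg E i + 1) := by
        rw [Finset.card_sdiff_of_subset (Finset.subset_univ s), Finset.card_univ, Fintype.card_fin, hcards]
      calc (n - 1 - outdeg E i) * δ = (Finset.univ \ s).card * δ := by rw [hcard]; congr 1; omega
        _ = ∑ _j ∈ Finset.univ \ s, δ := by rw [Finset.sum_const, smul_eq_mul]
        _ ≤ _ := Finset.sum_le_sum fun j _ => hδd j
    omega
  have hNsum : ∀ i : Fin n,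
      (∑ j ∈ Finset.univ.filter (fun j => E i j), (outdeg E j : ℝ))
        ≤ t + ((δ:ℝ) - 1) * (outdeg E i) := by
    intro i
    have h := hNsumNat i
    have hle := hNle i
    have : ((∑ j ∈ Finset.univ.filter (fun j => E i j), outdeg E j : ℕ) : ℝ)
        + (outdeg E i : ℝ) + ((n:ℝ) - 1 - (outdeg E i : ℝ)) * δ ≤ (m:ℝ) := by
      have hcast : ((n - 1 - outdeg E i : ℕ) : ℝ) = (n:ℝ) - 1 - (outdeg E i : ℝ) := by
        have h1 : outdeg E i ≤ n - 1 := hle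
        push_cast [Nat.cast_sub (by omega : outdeg E i ≤ n - 1), Nat.cast_sub (by omega : 1 ≤ n)]
        ring
      calc ((∑ j ∈ Finset.univ.filter (fun j => E i j), outdeg E j : ℕ) : ℝ)
          + (outdeg E i : ℝ) + ((n:ℝ) - 1 - (outdeg E i : ℝ)) * δ
          = (((∑ j ∈ Finset.univ.filter (fun j => E i j), outdeg E j)
              + outdeg E i + (n - 1 - outdeg E i) * δ : ℕ) : ℝ) := by
            push_cast [hcast]; ring
        _ ≤ (m:ℝ) := by exact_mod_cast h
    push_cast at this ⊢
    rw [ht]; nlinarith [this]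
  -- second bound on neighborhood sum
  have hNsum2 : ∀ i : Fin n,
      (∑ j ∈ Finset.univ.filter (fun j => E i j), (outdeg E j : ℝ))
        ≤ (Δ:ℝ) * (outdeg E i) := by
    intro i
    calc (∑ j ∈ Finset.univ.filter (fun j => E i j), (outdeg E j : ℝ))
        ≤ ∑ _j ∈ Finset.univ.filter (fun j => E i j), (Δ:ℝ) :=
          Finset.sum_le_sum fun j _ => by exact_mod_cast hdΔ j
      _ = (Δ:ℝ) * (outdeg E i) := by
          rw [Finset.sum_const, nsmul_eq_mul, hcardN, mul_comm]
  -- row sums of Q weighted by outdegrees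
  have hrowcalc : ∀ i : Fin n, ∑ j, Qmat E i j * (outdeg E j : ℝ)
      = (outdeg E i : ℝ) * (outdeg E i)
        + ∑ j ∈ Finset.univ.filter (fun j => E i j), (outdeg E j : ℝ) := by
    intro i
    simp only [Qmat, Matrix.add_apply, adjM, Matrix.diagonal_apply, add_mul, ite_mul, one_mul,
      zero_mul, Finset.sum_add_distrib, Finset.sum_ite_eq, Finset.mem_univ, if_true,
      ← Finset.sum_filter]
  -- abbreviations
  set R : ℝ := max ((Δ : ℝ) + δ - 1 + t / Δ) ((δ : ℝ) + 1 + t / 2) with hRdef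
  have hΔpos : (0:ℝ) < Δ := by
    have : 1 ≤ Δ := le_trans hδ1 hΔδ
    exact_mod_cast Nat.lt_of_lt_of_le Nat.zero_lt_one this
  have hδ1R : (1:ℝ) ≤ δ := by exact_mod_cast hδ1
  have htΔ1 : (1:ℝ) ≤ t / Δ := (le_div_iff₀ hΔpos).mpr (by linarith)
  have hRnn : (0:ℝ) ≤ R := le_trans (by linarith) (le_max_left _ _)
  -- the weighted row-sum bound
  have hrow : ∀ i : Fin n, ∑ j, Qmat E i j * (outdeg E j : ℝ) ≤ R * (outdeg E i : ℝ) := by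
    intro i
    rw [hrowcalc i]
    set S := ∑ j ∈ Finset.univ.filter (fun j => E i j), (outdeg E j : ℝ) with hS
    set d : ℝ := (outdeg E i : ℝ) with hd
    have hd1R : (1:ℝ) ≤ d := by rw [hd]; exact_mod_cast hd1 i
    have hdΔR : d ≤ (Δ:ℝ) := by rw [hd]; exact_mod_cast hdΔ i
    by_cases hd2 : (2:ℝ) ≤ d
    · have hSle : S ≤ t + ((δ:ℝ) - 1) * d := hNsum i
      by_cases htd : t ≤ 2*d
      · -- use the first bound
        refine le_trans ?_ (mul_le_mul_of_nonneg_right (le_max_left _ _) (by linarith))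
        have hΔ2 : (2:ℝ) ≤ (Δ:ℝ) := le_trans hd2 hdΔR
        have hta : t / Δ * Δ = t := div_mul_cancel₀ _ hΔpos.ne'
        have htdiv : t / Δ ≤ d := by
          rw [div_le_iff₀ hΔpos]
          nlinarith
        nlinarith [mul_nonneg (sub_nonneg.mpr hdΔR) (sub_nonneg.mpr htdiv)]
      · -- use the second bound
        refine le_trans ?_ (mul_le_mul_of_nonneg_right (le_max_right _ _) (by linarith))
        nlinarith [mul_nonneg (sub_nonneg.mpr hd2) (by linarith : (0:ℝ) ≤ t - 2*d)]
    · -- outdegree 1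
      have hdeq : d = 1 := by
        have hlt : d < 2 := not_le.mp hd2
        rw [hd] at hlt ⊢
        have h2 : outdeg E i < 2 := by exact_mod_cast hlt
        have h3 : outdeg E i = 1 := by have := hd1 i; omega
        rw [h3, Nat.cast_one]
      have hSle : S ≤ (Δ:ℝ) * d := hNsum2 i
      refine le_trans ?_ (mul_le_mul_of_nonneg_right (le_max_left _ _) (by linarith))
      rw [hdeq] at hSle ⊢
      linarith
  -- nonnegativity of the entries of Q
  have hMnn : ∀ i j, 0 ≤ Qmat E i j := by
    intro i j
    simp only [Qmat, Matrix.add_apply, adjM, Matrix.diagonal_apply]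
    apply add_nonneg <;> split <;> simp
  have hwpos : ∀ i, (0:ℝ) < (outdeg E i : ℝ) := by
    intro i; exact_mod_cast Nat.lt_of_lt_of_le Nat.zero_lt_one (hd1 i)
  -- conclude via the spectral bound
  have hspec := spec_bound (Qmat E) (fun i => (outdeg E i : ℝ)) hwpos R hMnn hrow
  show qG E ≤ R
  rw [qG, specRadR, specRad]
  apply Real.sSup_le _ hRnn
  rintro x ⟨μ, hμ, rfl⟩
  exact hspec μ hμ
end

section
/- Let G be a strongly connected digraph with n ≥ 3 vertices, m arcs, maximum outdegree Δ⁺ and minimum outdegree δ⁺. If Δ⁺ ≥ (m − (n−1))/2 and δ⁺ = 1, then q(G) ≤ Δ⁺ + 2. -/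
open Matrix Finset

/-- if `Δ⁺ ≥ (m − (n−1))/2` and `δ⁺ = 1`, then `q(G) ≤ Δ⁺ + 2`. -/
theorem stmt_5 {n : ℕ} (hn : 3 ≤ n) (E : Fin n → Fin n → Prop) [DecidableRel E]
    (hloop : ∀ i, ¬ E i i) (hsc : StrongConn E)
    (m Δ : ℕ) (hm : m = ∑ i, outdeg E i)
    (hΔ : IsGreatest (Set.range (outdeg E)) Δ)
    (hδ : IsLeast (Set.range (outdeg E)) 1)
    (hbig : ((m : ℝ) - (n - 1)) / 2 ≤ (Δ : ℝ)) :
    qG E ≤ (Δ : ℝ) + 2 := by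
  have hd1 : ∀ i, 1 ≤ outdeg E i := fun i => hδ.2 ⟨i, rfl⟩
  have hdΔ : ∀ i, outdeg E i ≤ Δ := fun i => hΔ.2 ⟨i, rfl⟩
  have hΔ0 : (0:ℝ) ≤ (Δ:ℝ) := Nat.cast_nonneg Δ
  apply Real.sSup_le _ (by linarith)
  rintro r ⟨μ, hμ, rfl⟩
  -- extract an eigenvector
  obtain ⟨x, hx0, hx⟩ : ∃ x : Fin n → ℂ, x ≠ 0 ∧ ((Qmat E).map Complex.ofReal).mulVec x = μ • x := by
    rw [← AlgEquiv.spectrum_eq (Matrix.toLinAlgEquiv' : Matrix (Fin n) (Fin n) ℂ ≃ₐ[ℂ] _)] at hμ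
    obtain ⟨y, hy⟩ := (Module.End.hasEigenvalue_iff_mem_spectrum.mpr hμ).exists_hasEigenvector
    exact ⟨y, hy.2, by rw [← Matrix.toLinAlgEquiv'_apply]; exact hy.apply_eq_smul⟩
  -- componentwise eigen-equation
  have key : ∀ i, (μ - (outdeg E i : ℂ)) * x i = ∑ j ∈ univ.filter (fun j => E i j), x j := by
    intro i
    have h1 := congrFun hx i
    simp only [mulVec, dotProduct, Pi.smul_apply, smul_eq_mul, Qmat, Matrix.map_apply,
      Matrix.add_apply, adjM, Matrix.diagonal_apply, Complex.ofReal_add, apply_ite Complex.ofReal,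
      Complex.ofReal_natCast, Complex.ofReal_one, Complex.ofReal_zero, add_mul, ite_mul, one_mul,
      zero_mul, Finset.sum_add_distrib, Finset.sum_ite_eq, mem_univ, if_true] at h1
    rw [sub_mul, Finset.sum_filter, ← h1]; ring
  -- the scaled vector and its maximizer
  set z : Fin n → ℝ := fun j => ‖x j‖ / (outdeg E j : ℝ) with hz
  obtain ⟨i, -, hi⟩ := Finset.exists_max_image (univ : Finset (Fin n)) z
    ⟨⟨0, by omega⟩, mem_univ _⟩
  have hdpos : ∀ j, (0:ℝ) < (outdeg E j : ℝ) := fun j => by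
    exact_mod_cast Nat.lt_of_lt_of_le Nat.zero_lt_one (hd1 j)
  have hxabs : ∀ j, ‖x j‖ = (outdeg E j : ℝ) * z j := fun j => by
    rw [hz, mul_comm]
    exact (div_mul_cancel₀ _ (ne_of_gt (hdpos j))).symm
  have hzpos : 0 < z i := by
    obtain ⟨j, hj⟩ := Function.ne_iff.mp hx0
    have : 0 < z j := div_pos (by simpa using hj) (hdpos j)
    exact lt_of_lt_of_le this (hi j (mem_univ j))
  set S : ℝ := ∑ j ∈ univ.filter (fun j => E i j), (outdeg E j : ℝ) with hS
  have habs2 : ‖μ - (outdeg E i : ℂ)‖ * (outdeg E i : ℝ) ≤ S := by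
    have e1 : ‖μ - (outdeg E i : ℂ)‖ * ((outdeg E i : ℝ) * z i)
        ≤ S * z i := by
      rw [← hxabs i, ← norm_mul, key i]
      calc ‖∑ j ∈ univ.filter (fun j => E i j), x j‖
          ≤ ∑ j ∈ univ.filter (fun j => E i j), ‖x j‖ :=
            norm_sum_le _ _
        _ = ∑ j ∈ univ.filter (fun j => E i j), (outdeg E j : ℝ) * z j := by
            simp_rw [hxabs]
        _ ≤ ∑ j ∈ univ.filter (fun j => E i j), (outdeg E j : ℝ) * z i := by
            refine Finset.sum_le_sum fun j _ => ?_
            exact mul_le_mul_of_nonneg_left (hi j (mem_univ j)) (le_of_lt (hdpos j))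
        _ = S * z i := by rw [hS, Finset.sum_mul]
    rw [← mul_assoc] at e1
    exact le_of_mul_le_mul_right e1 hzpos
  have htri : ‖μ‖ ≤ ‖μ - (outdeg E i : ℂ)‖ + (outdeg E i : ℝ) := by
    calc ‖μ‖ = ‖(μ - (outdeg E i : ℂ)) + (outdeg E i : ℂ)‖ := by ring_nf
      _ ≤ ‖μ - (outdeg E i : ℂ)‖ + ‖(outdeg E i : ℂ)‖ :=
          norm_add_le _ _
      _ = ‖μ - (outdeg E i : ℂ)‖ + (outdeg E i : ℝ) := by
          rw [Complex.norm_natCast]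
  have ha0 : 0 ≤ ‖μ - (outdeg E i : ℂ)‖ := norm_nonneg _
  rcases Nat.lt_or_ge (outdeg E i) 2 with h2 | h2
  · -- outdegree 1 at the maximizing vertex
    have hone : outdeg E i = 1 := le_antisymm (by omega) (hd1 i)
    obtain ⟨j, hjcard⟩ := Finset.card_eq_one.mp hone
    have hSval : S = (outdeg E j : ℝ) := by rw [hS, hjcard, Finset.sum_singleton]
    have hSΔ : S ≤ (Δ:ℝ) := by rw [hSval]; exact_mod_cast hdΔ j
    rw [hone] at habs2 htri
    push_cast at habs2 htri
    linarith
  · -- outdegree ≥ 2 at the maximizing vertex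
    have hd2 : (2:ℝ) ≤ (outdeg E i : ℝ) := by exact_mod_cast h2
    have hdle : (outdeg E i : ℝ) ≤ (Δ:ℝ) := by exact_mod_cast hdΔ i
    -- S ≤ m - (n-1)
    have hSnat : (∑ j ∈ univ.filter (fun j => E i j), outdeg E j) + (n - 1) ≤ m := by
      have hsplit : (∑ j ∈ univ \ univ.filter (fun j => E i j), outdeg E j)
          + (∑ j ∈ univ.filter (fun j => E i j), outdeg E j) = m := by
        rw [hm]; exact Finset.sum_sdiff (Finset.filter_subset _ _)
      have hiN : i ∈ univ \ univ.filter (fun j => E i j) := by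
        simp [hloop i]
      have hsub : outdeg E i ≤ n - 1 := by
        have : univ.filter (fun j => E i j) ⊆ Finset.univ.erase i := by
          intro j hj
          rcases Finset.mem_filter.mp hj with ⟨-, hEij⟩
          exact Finset.mem_erase.mpr ⟨fun h => hloop i (h ▸ hEij), mem_univ j⟩
        have := Finset.card_le_card this
        simpa [outdeg, Finset.card_erase_of_mem] using this
      have hcard : (univ \ univ.filter (fun j => E i j)).card = n - outdeg E i := by
        rw [Finset.card_sdiff_of_subset (Finset.filter_subset _ _)]
        simp [outdeg]
      have h1 : ∑ j ∈ univ \ univ.filter (fun j => E i j), outdeg E j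
          = outdeg E i + ∑ j ∈ (univ \ univ.filter (fun j => E i j)).erase i, outdeg E j := by
        rw [Finset.add_sum_erase _ _ hiN]
      have h2 : ((univ \ univ.filter (fun j => E i j)).erase i).card
          ≤ ∑ j ∈ (univ \ univ.filter (fun j => E i j)).erase i, outdeg E j := by
        rw [Finset.card_eq_sum_ones]
        exact Finset.sum_le_sum (fun j _ => hd1 j)
      have h3 : ((univ \ univ.filter (fun j => E i j)).erase i).card
          = n - outdeg E i - 1 := by rw [Finset.card_erase_of_mem hiN, hcard]
      have hd1i := hd1 i
      omega
    have hSR : S ≤ (m:ℝ) - ((n:ℝ) - 1) := by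
      have h1 : (((∑ j ∈ univ.filter (fun j => E i j), outdeg E j) + (n - 1) : ℕ) : ℝ) ≤ (m:ℝ) :=
        Nat.cast_le.mpr hSnat
      push_cast [Nat.cast_sub (by omega : 1 ≤ n)] at h1
      have hSe : S = ((∑ j ∈ univ.filter (fun j => E i j), outdeg E j : ℕ) : ℝ) := by
        rw [hS]; push_cast; rfl
      linarith
    have hS2Δ : S ≤ 2 * (Δ:ℝ) := by linarith
    nlinarith [mul_nonneg (by linarith : (0:ℝ) ≤ (outdeg E i : ℝ) - 2)
      (by linarith : (0:ℝ) ≤ (Δ:ℝ) - (outdeg E i : ℝ)), habs2, htri, ha0,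
      mul_le_mul_of_nonneg_right ha0 (by linarith : (0:ℝ) ≤ (outdeg E i : ℝ))]
end

section
/- Let A be an irreducible n×n complex matrix with n ≥ 2, let r_i = Σ_{j≠i} |a_{ij}|, and for i ≠ j let S_{ij} = { z ∈ ℂ : |z − a_{ii}|·|z − a_{jj}| ≤ r_i r_j }. Then every eigenvalue of A lies in the union of the regions S_{ij} taken over all pairs (i,j) with i ≠ j and a_{ij} ≠ 0. -/
open Matrix Finset

lemma exists_arc' {α : Type*} {r : α → α → Prop} {b : α} :
    ∀ {a}, Relation.TransGen r a b → a ≠ b → ∃ c, c ≠ a ∧ r a c := by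
  intro a h
  induction h using Relation.TransGen.head_induction_on with
  | single h => exact fun hab => ⟨b, Ne.symm hab, h⟩
  | head h' h ih =>
    intro hab
    rename_i a' c
    by_cases hc : c = a'
    · subst hc; exact ih hab
    · exact ⟨c, hc, h'⟩


/-- every eigenvalue of an irreducible complex matrix lies in the union of the
Brauer ovals `S_{ij}` taken over pairs `i ≠ j` with `a_{ij} ≠ 0`. -/
theorem stmt_6 {n : ℕ} (hn : 2 ≤ n) (A : Matrix (Fin n) (Fin n) ℂ)
    (hirr : MatIrred A) (μ : ℂ) (hμ : μ ∈ spectrum ℂ A) :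
    ∃ i j : Fin n, i ≠ j ∧ A i j ≠ 0 ∧
      ‖μ - A i i‖ * ‖μ - A j j‖ ≤
        (∑ k ∈ Finset.univ.erase i, ‖A i k‖) *
        (∑ k ∈ Finset.univ.erase j, ‖A j k‖) := by
  -- obtain eigenvector
  have h1 : Module.End.HasEigenvalue (Matrix.toLin' A) μ := by
    rw [Module.End.hasEigenvalue_iff_mem_spectrum]
    rwa [← AlgEquiv.spectrum_eq (Matrix.toLinAlgEquiv' : Matrix (Fin n) (Fin n) ℂ ≃ₐ[ℂ] _) A] at hμ
  obtain ⟨x, hx⟩ := h1.exists_hasEigenvector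
  have hxeq : A.mulVec x = μ • x := by rw [← Matrix.toLin'_apply, hx.apply_eq_smul]
  -- pick i maximizing |x i|
  obtain ⟨i, -, hi⟩ := Finset.exists_max_image Finset.univ (fun k => ‖x k‖)
    ⟨⟨0, by omega⟩, mem_univ _⟩
  have hxi : 0 < ‖x i‖ := by
    rcases Function.ne_iff.mp hx.2 with ⟨k, hk⟩
    exact lt_of_lt_of_le (by simpa using hk) (hi k (mem_univ k))
  -- basic eigen equation at a row l
  have key : ∀ l : Fin n, ‖μ - A l l‖ * ‖x l‖ ≤
      ∑ k ∈ Finset.univ.erase l, ‖A l k‖ * ‖x k‖ := by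
    intro l
    have h2 : ∑ k, A l k * x k = μ * x l := by
      have := congrFun hxeq l
      simpa [Matrix.mulVec, dotProduct] using this
    have h3 : (μ - A l l) * x l = ∑ k ∈ Finset.univ.erase l, A l k * x k := by
      rw [Finset.sum_erase_eq_sub (Finset.mem_univ l), h2, sub_mul]
    calc ‖μ - A l l‖ * ‖x l‖
        = ‖(μ - A l l) * x l‖ := (norm_mul _ _).symm
      _ = ‖∑ k ∈ Finset.univ.erase l, A l k * x k‖ := by rw [h3]
      _ ≤ ∑ k ∈ Finset.univ.erase l, ‖A l k * x k‖ :=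
          norm_sum_le _ _
      _ = ∑ k ∈ Finset.univ.erase l, ‖A l k‖ * ‖x k‖ := by
          simp [norm_mul]
  -- neighbors of i
  set t : Finset (Fin n) := (Finset.univ.erase i).filter (fun k => A i k ≠ 0) with ht
  have htne : t.Nonempty := by
    obtain ⟨i', hi'⟩ : ∃ i' : Fin n, i' ≠ i := by
      refine ⟨if i = ⟨0, by omega⟩ then ⟨1, by omega⟩ else ⟨0, by omega⟩, ?_⟩
      split <;> simp_all [Fin.ext_iff] <;> omega
    obtain ⟨c, hc, hAc⟩ := exists_arc' (hirr i i' (Ne.symm hi')) (Ne.symm hi')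
    exact ⟨c, by simp [ht, hc, hAc]⟩
  obtain ⟨j, hjt, hj⟩ := Finset.exists_max_image t (fun k => ‖x k‖) htne
  have hji : j ≠ i := (Finset.mem_filter.mp hjt).1 |> Finset.ne_of_mem_erase
  have hAij : A i j ≠ 0 := (Finset.mem_filter.mp hjt).2
  refine ⟨i, j, Ne.symm hji, hAij, ?_⟩
  have hri : ‖μ - A i i‖ * ‖x i‖ ≤
      (∑ k ∈ Finset.univ.erase i, ‖A i k‖) * ‖x j‖ := by
    refine (key i).trans ?_
    rw [Finset.sum_mul]
    refine Finset.sum_le_sum fun k hk => ?_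
    by_cases hAk : A i k = 0
    · simp [hAk]
    · have hkt : k ∈ t := Finset.mem_filter.mpr ⟨hk, hAk⟩
      exact mul_le_mul_of_nonneg_left (hj k hkt) (norm_nonneg _)
  have hrj : ‖μ - A j j‖ * ‖x j‖ ≤
      (∑ k ∈ Finset.univ.erase j, ‖A j k‖) * ‖x i‖ := by
    refine (key j).trans ?_
    rw [Finset.sum_mul]
    exact Finset.sum_le_sum fun k hk =>
      mul_le_mul_of_nonneg_left (hi k (mem_univ k)) (norm_nonneg _)
  by_cases hxj : ‖x j‖ = 0
  · have : ‖μ - A i i‖ = 0 := by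
      have := hri
      rw [hxj, mul_zero] at this
      nlinarith [norm_nonneg (μ - A i i), hxi]
    rw [this, zero_mul]
    exact mul_nonneg (Finset.sum_nonneg fun k _ => norm_nonneg _)
      (Finset.sum_nonneg fun k _ => norm_nonneg _)
  · have hxj' : 0 < ‖x j‖ := lt_of_le_of_ne (norm_nonneg _) (Ne.symm hxj)
    have hmul := mul_le_mul hri hrj (mul_nonneg (norm_nonneg _) (norm_nonneg _))
      (mul_nonneg (Finset.sum_nonneg fun k _ => norm_nonneg _) (norm_nonneg _))
    have hpos : 0 < ‖x i‖ * ‖x j‖ := mul_pos hxi hxj'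
    nlinarith [hmul]
end

section
/- Let G be a strongly connected digraph. Then q(G) ≤ max over arcs (v_i,v_j) ∈ E(G) of ( d_i^+ + d_j^+ + sqrt( (d_i^+ − d_j^+)² + 4·sqrt(d_i^+ m_i^+)·sqrt(d_j^+ m_j^+) ) ) / 2. -/
open Matrix Finset

/-- Every vertex of a strongly connected digraph with at least one arc has positive outdegree. -/
lemma aux_outdeg_pos {n : ℕ} (E : Fin n → Fin n → Prop) [DecidableRel E]
    (hloop : ∀ i, ¬ E i i) (hsc : StrongConn E) (harcs : (arcs E).Nonempty) :
    ∀ i, 0 < outdeg E i := by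
  obtain ⟨p, hp⟩ := harcs
  rw [arcs, Finset.mem_filter] at hp
  have hab : p.1 ≠ p.2 := by
    intro h
    exact hloop p.1 (by rw [h] at hp ⊢; exact hp.2)
  intro i
  rw [outdeg, Finset.card_pos]
  have hex : ∃ t, t ≠ i := by
    by_cases h : p.1 = i
    · exact ⟨p.2, fun hh => hab (h.trans hh.symm)⟩
    · exact ⟨p.1, h⟩
  obtain ⟨t, ht⟩ := hex
  rcases (hsc i t).cases_head with h | ⟨c, hc, -⟩
  · exact absurd h.symm ht
  · exact ⟨c, Finset.mem_filter.mpr ⟨Finset.mem_univ c, hc⟩⟩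

set_option maxHeartbeats 1000000 in
/-- Row estimate for the rescaled eigenvector. -/
lemma aux_row {n : ℕ} (E : Fin n → Fin n → Prop) [DecidableRel E]
    (hpos : ∀ i, 0 < outdeg E i)
    (μ : ℂ) (x : Fin n → ℂ) (hmul : ((Qmat E).map Complex.ofReal).mulVec x = μ • x)
    (i : Fin n) (c : ℝ) (hc : 0 ≤ c)
    (hbd : ∀ j ∈ Finset.univ.filter (fun j => E i j),
      ‖x j‖ / Real.sqrt (outdeg E j) ≤ c) :
    ‖μ - ((outdeg E i : ℝ) : ℂ)‖ * (‖x i‖ / Real.sqrt (outdeg E i)) ≤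
      Real.sqrt ((outdeg E i : ℝ) * m2 E i) * c := by
  set N := Finset.univ.filter (fun j => E i j) with hN
  have hD : ∀ j : Fin n, (0 : ℝ) < (outdeg E j : ℝ) := fun j => by exact_mod_cast hpos j
  have hs : ∀ j : Fin n, (0 : ℝ) < Real.sqrt (outdeg E j) := fun j => Real.sqrt_pos.mpr (hD j)
  -- row equation
  have hrow : μ * x i - ((outdeg E i : ℝ) : ℂ) * x i = ∑ j ∈ N, x j := by
    have h1 := congrFun hmul i
    simp only [Matrix.mulVec, dotProduct, Pi.smul_apply, smul_eq_mul] at h1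
    have h2 : ∀ j, ((Qmat E).map Complex.ofReal) i j * x j =
        (if i = j then ((outdeg E i : ℝ) : ℂ) else 0) * x j
          + (if E i j then 1 else 0) * x j := by
      intro j
      simp only [Qmat, adjM, Matrix.map_apply, Matrix.add_apply, Matrix.diagonal_apply]
      push_cast
      split_ifs <;> push_cast <;> ring
    rw [Finset.sum_congr rfl (fun j _ => h2 j), Finset.sum_add_distrib] at h1
    simp only [ite_mul, zero_mul, one_mul, Finset.sum_ite_eq, Finset.mem_univ, if_true,
      ← Finset.sum_filter] at h1
    rw [← h1, hN]; ring
  -- the sum of square roots bound (Cauchy–Schwarz)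
  have hm2 : ∑ j ∈ N, (outdeg E j : ℝ) = (outdeg E i : ℝ) * m2 E i := by
    have hne : ((outdeg E i : ℝ)) ≠ 0 := (hD i).ne'
    rw [m2, hN]
    field_simp
  have hm2nn : 0 ≤ m2 E i := by
    rw [m2]
    positivity
  have hcs : ∑ j ∈ N, Real.sqrt (outdeg E j) ≤
      Real.sqrt (outdeg E i) * Real.sqrt ((outdeg E i : ℝ) * m2 E i) := by
    have h1 : (∑ j ∈ N, Real.sqrt (outdeg E j)) ^ 2 ≤
        (N.card : ℝ) * ∑ j ∈ N, (Real.sqrt (outdeg E j)) ^ 2 :=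
      sq_sum_le_card_mul_sum_sq
    have hcard : (N.card : ℝ) = (outdeg E i : ℝ) := by
      have : N.card = outdeg E i := rfl
      rw [this]
    have h2 : ∑ j ∈ N, (Real.sqrt (outdeg E j)) ^ 2 = (outdeg E i : ℝ) * m2 E i := by
      rw [← hm2]
      exact Finset.sum_congr rfl (fun j _ => Real.sq_sqrt (hD j).le)
    rw [hcard, h2] at h1
    have h3 := Real.sqrt_le_sqrt h1
    rw [Real.sqrt_sq (by positivity), Real.sqrt_mul (hD i).le] at h3
    exact h3
  -- bound the absolute value of the row sum
  have habs : ‖μ - ((outdeg E i : ℝ) : ℂ)‖ * ‖x i‖ ≤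
      c * (Real.sqrt (outdeg E i) * Real.sqrt ((outdeg E i : ℝ) * m2 E i)) := by
    have h1 : ‖μ - ((outdeg E i : ℝ) : ℂ)‖ * ‖x i‖
        = ‖∑ j ∈ N, x j‖ := by
      rw [← norm_mul]
      congr 1
      rw [sub_mul]
      exact hrow
    have h2 : ‖∑ j ∈ N, x j‖ ≤ ∑ j ∈ N, ‖x j‖ :=
      norm_sum_le _ _
    have h3 : ∑ j ∈ N, ‖x j‖ ≤ c * ∑ j ∈ N, Real.sqrt (outdeg E j) := by
      rw [Finset.mul_sum]
      refine Finset.sum_le_sum (fun j hj => ?_)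
      have := hbd j (hN ▸ hj)
      rw [div_le_iff₀ (hs j)] at this
      linarith
    have h4 : c * ∑ j ∈ N, Real.sqrt (outdeg E j) ≤
        c * (Real.sqrt (outdeg E i) * Real.sqrt ((outdeg E i : ℝ) * m2 E i)) :=
      mul_le_mul_of_nonneg_left hcs hc
    linarith
  rw [← mul_div_assoc, div_le_iff₀ (hs i)]
  calc ‖μ - ((outdeg E i : ℝ) : ℂ)‖ * ‖x i‖
      ≤ c * (Real.sqrt (outdeg E i) * Real.sqrt ((outdeg E i : ℝ) * m2 E i)) := habs
    _ = Real.sqrt ((outdeg E i : ℝ) * m2 E i) * c * Real.sqrt (outdeg E i) := by ring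

set_option maxHeartbeats 1000000 in
/-- `q(G) ≤ max over arcs of
`(d_i⁺+d_j⁺+√((d_i⁺−d_j⁺)²+4√(d_i⁺m_i⁺)√(d_j⁺m_j⁺)))/2`. -/
theorem stmt_7 {n : ℕ} (E : Fin n → Fin n → Prop) [DecidableRel E]
    (hloop : ∀ i, ¬ E i i) (hsc : StrongConn E) (harcs : (arcs E).Nonempty) :
    qG E ≤ (arcs E).sup' harcs (fun p =>
      ((outdeg E p.1 : ℝ) + (outdeg E p.2 : ℝ) +
        Real.sqrt (((outdeg E p.1 : ℝ) - (outdeg E p.2 : ℝ)) ^ 2 +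
          4 * Real.sqrt ((outdeg E p.1 : ℝ) * m2 E p.1) *
            Real.sqrt ((outdeg E p.2 : ℝ) * m2 E p.2))) / 2) := by
  have hpos := aux_outdeg_pos E hloop hsc harcs
  set D : Fin n → ℝ := fun i => (outdeg E i : ℝ) with hDdef
  set F : Fin n → Fin n → ℝ := fun i j =>
    (D i + D j + Real.sqrt ((D i - D j) ^ 2 +
      4 * Real.sqrt (D i * m2 E i) * Real.sqrt (D j * m2 E j))) / 2 with hFdef
  set B := (arcs E).sup' harcs (fun p =>
      ((outdeg E p.1 : ℝ) + (outdeg E p.2 : ℝ) +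
        Real.sqrt (((outdeg E p.1 : ℝ) - (outdeg E p.2 : ℝ)) ^ 2 +
          4 * Real.sqrt ((outdeg E p.1 : ℝ) * m2 E p.1) *
            Real.sqrt ((outdeg E p.2 : ℝ) * m2 E p.2))) / 2) with hBdef
  have hD : ∀ j : Fin n, (0 : ℝ) < D j := fun j => by
    simp only [hDdef]; exact_mod_cast hpos j
  have hFB : ∀ i j, E i j → F i j ≤ B := by
    intro i j h
    have hmem : (i, j) ∈ arcs E := Finset.mem_filter.mpr ⟨Finset.mem_univ _, h⟩
    exact Finset.le_sup' (fun p : Fin n × Fin n =>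
      ((outdeg E p.1 : ℝ) + (outdeg E p.2 : ℝ) +
        Real.sqrt (((outdeg E p.1 : ℝ) - (outdeg E p.2 : ℝ)) ^ 2 +
          4 * Real.sqrt ((outdeg E p.1 : ℝ) * m2 E p.1) *
            Real.sqrt ((outdeg E p.2 : ℝ) * m2 E p.2))) / 2) hmem
  have hdF : ∀ i j, D i ≤ F i j ∧ D j ≤ F i j := by
    intro i j
    have h1 : |D i - D j| ≤ Real.sqrt ((D i - D j) ^ 2 +
        4 * Real.sqrt (D i * m2 E i) * Real.sqrt (D j * m2 E j)) := by
      rw [← Real.sqrt_sq_eq_abs]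
      apply Real.sqrt_le_sqrt
      nlinarith [Real.sqrt_nonneg (D i * m2 E i), Real.sqrt_nonneg (D j * m2 E j)]
    constructor <;>
      · simp only [hFdef]
        cases' abs_cases (D i - D j) with h h <;> linarith [h1]
  have hB0 : 0 ≤ B := by
    obtain ⟨p, hp⟩ := harcs
    rw [arcs, Finset.mem_filter] at hp
    exact le_trans (le_trans (hD p.1).le (hdF p.1 p.2).1) (hFB p.1 p.2 hp.2)
  rw [qG, specRadR, specRad]
  apply Real.sSup_le _ hB0
  rintro t ⟨μ, hμ, rfl⟩
  -- get an eigenvector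
  rw [spectrum.mem_iff, Matrix.isUnit_iff_isUnit_det] at hμ
  have hdet : ((algebraMap ℂ (Matrix (Fin n) (Fin n) ℂ)) μ - (Qmat E).map Complex.ofReal).det
      = 0 := by
    by_contra h0; exact hμ (isUnit_iff_ne_zero.mpr h0)
  obtain ⟨x, hx0, hx⟩ := (Matrix.exists_mulVec_eq_zero_iff).mpr hdet
  have hmul : ((Qmat E).map Complex.ofReal).mulVec x = μ • x := by
    rw [Matrix.sub_mulVec] at hx
    have h2 : (algebraMap ℂ (Matrix (Fin n) (Fin n) ℂ)) μ
        = μ • (1 : Matrix (Fin n) (Fin n) ℂ) := by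
      simp [Algebra.algebraMap_eq_smul_one]
    rw [h2, Matrix.smul_mulVec, Matrix.one_mulVec] at hx
    have := sub_eq_zero.mp hx
    rw [← this]
  -- rescaled eigenvector entries
  set g : Fin n → ℝ := fun j => ‖x j‖ / Real.sqrt (D j) with hgdef
  have hgnn : ∀ j, 0 ≤ g j := fun j => by positivity
  have huniv : (Finset.univ : Finset (Fin n)).Nonempty := by
    obtain ⟨p, _⟩ := harcs
    exact ⟨p.1, Finset.mem_univ _⟩
  obtain ⟨u, -, hu⟩ := Finset.exists_max_image Finset.univ g huniv
  have hgu : 0 < g u := by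
    obtain ⟨i, hi⟩ := Function.ne_iff.mp hx0
    have : 0 < g i := by
      simp only [hgdef]
      have h1 : 0 < ‖x i‖ := by
        simpa [norm_pos_iff] using hi
      have h2 : 0 < Real.sqrt (D i) := Real.sqrt_pos.mpr (hD i)
      positivity
    exact lt_of_lt_of_le this (hu i (Finset.mem_univ i))
  have hNu : (Finset.univ.filter (fun j => E u j)).Nonempty := by
    rw [← Finset.card_pos]
    exact hpos u
  obtain ⟨v, hv, hvmax⟩ := Finset.exists_max_image _ g hNu
  have hEuv : E u v := (Finset.mem_filter.mp hv).2
  have est1 : ‖μ - ((outdeg E u : ℝ) : ℂ)‖ * g u ≤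
      Real.sqrt (D u * m2 E u) * g v :=
    aux_row E hpos μ x hmul u (g v) (hgnn v) hvmax
  have est2 : ‖μ - ((outdeg E v : ℝ) : ℂ)‖ * g v ≤
      Real.sqrt (D v * m2 E v) * g u :=
    aux_row E hpos μ x hmul v (g u) (hgnn u) (fun j _ => hu j (Finset.mem_univ j))
  have hFuvB : F u v ≤ B := hFB u v hEuv
  set Au := ‖μ - ((outdeg E u : ℝ) : ℂ)‖ with hAu
  set Av := ‖μ - ((outdeg E v : ℝ) : ℂ)‖ with hAv
  set su := Real.sqrt (D u * m2 E u) with hsu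
  set sv := Real.sqrt (D v * m2 E v) with hsv
  have hsunn : 0 ≤ su := Real.sqrt_nonneg _
  have hsvnn : 0 ≤ sv := Real.sqrt_nonneg _
  -- triangle inequality facts
  have htu : ‖μ‖ - D u ≤ Au := by
    have h1 : ‖μ‖ ≤ Au + ‖((outdeg E u : ℝ) : ℂ)‖ := by
      calc ‖μ‖ = ‖(μ - ((outdeg E u : ℝ) : ℂ))
            + ((outdeg E u : ℝ) : ℂ)‖ := by ring_nf
        _ ≤ Au + ‖((outdeg E u : ℝ) : ℂ)‖ := norm_add_le _ _
    have h2 : ‖((outdeg E u : ℝ) : ℂ)‖ = D u := by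
      rw [Complex.norm_real, Real.norm_eq_abs, abs_of_nonneg (hD u).le]
    linarith
  have htv : ‖μ‖ - D v ≤ Av := by
    have h1 : ‖μ‖ ≤ Av + ‖((outdeg E v : ℝ) : ℂ)‖ := by
      calc ‖μ‖ = ‖(μ - ((outdeg E v : ℝ) : ℂ))
            + ((outdeg E v : ℝ) : ℂ)‖ := by ring_nf
        _ ≤ Av + ‖((outdeg E v : ℝ) : ℂ)‖ := norm_add_le _ _
    have h2 : ‖((outdeg E v : ℝ) : ℂ)‖ = D v := by
      rw [Complex.norm_real, Real.norm_eq_abs, abs_of_nonneg (hD v).le]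
    linarith
  rcases eq_or_lt_of_le (hgnn v) with hgv | hgv
  · -- g v = 0 : μ = d_u
    have h1 : Au * g u ≤ 0 := by
      rw [← hgv] at est1; simpa using est1
    have h2 : Au = 0 := by
      have := norm_nonneg (μ - ((outdeg E u : ℝ) : ℂ))
      nlinarith
    have h3 : μ = ((outdeg E u : ℝ) : ℂ) := by
      rw [hAu] at h2
      exact sub_eq_zero.mp (norm_eq_zero.mp h2)
    rw [h3]
    have h4 : ‖((outdeg E u : ℝ) : ℂ)‖ = D u := by
      rw [Complex.norm_real, Real.norm_eq_abs, abs_of_nonneg (hD u).le]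
    rw [h4]
    exact le_trans (hdF u v).1 hFuvB
  · -- g v > 0 : the Cassini-oval estimate
    have hmm := mul_le_mul est1 est2 (by positivity) (by positivity)
    have key : Au * Av ≤ su * sv := by
      have h2 : (Au * Av) * (g u * g v) ≤ (su * sv) * (g u * g v) := by nlinarith [hmm]
      exact le_of_mul_le_mul_right h2 (by positivity)
    -- suffices to show |μ| ≤ F u v
    refine le_trans ?_ hFuvB
    by_contra hcon
    push_neg at hcon
    set t := ‖μ‖ with ht
    set S := Real.sqrt ((D u - D v) ^ 2 + 4 * su * sv) with hS
    have hSnn : 0 ≤ S := Real.sqrt_nonneg _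
    have hSsq : S ^ 2 = (D u - D v) ^ 2 + 4 * su * sv := by
      rw [hS]; exact Real.sq_sqrt (by positivity)
    have hFf : F u v = (D u + D v + S) / 2 := by
      simp only [hFdef]
      rfl
    rw [hFf] at hcon
    have htgtu : D u < t := lt_of_le_of_lt ((hdF u v).1.trans_eq hFf) hcon
    have htgtv : D v < t := lt_of_le_of_lt ((hdF u v).2.trans_eq hFf) hcon
    have h4 : (t - D u) * (t - D v) ≤ Au * Av :=
      mul_le_mul htu htv (by linarith) (norm_nonneg _)
    have h5 : S < 2 * t - D u - D v := by linarith
    have h6 : S ^ 2 < (2 * t - D u - D v) ^ 2 := by nlinarith [h5, hSnn]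
    nlinarith [h6, h4, key, hSsq]
end

section
/- Let G be a digraph with at least one arc and let f : V(G) × V(G) → ℝ≥0 be a function that is strictly positive on all arcs of G. Then q(G) ≤ max over arcs (v_i,v_j) ∈ E(G) of ( Σ_{v_k : (v_i,v_k)∈E(G)} f(v_i,v_k) + Σ_{v_k : (v_j,v_k)∈E(G)} f(v_j,v_k) ) / f(v_i,v_j). -/
open Matrix Finset

/-- weighted upper bound for `q(G)` via a function positive on arcs. -/
theorem stmt_8 {n : ℕ} (E : Fin n → Fin n → Prop) [DecidableRel E]
    (hloop : ∀ i, ¬ E i i) (harcs : (arcs E).Nonempty)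
    (f : Fin n → Fin n → ℝ) (hf : ∀ i j, 0 ≤ f i j)
    (hfpos : ∀ i j, E i j → 0 < f i j) :
    qG E ≤ (arcs E).sup' harcs (fun p =>
      ((∑ k ∈ Finset.univ.filter (fun k => E p.1 k), f p.1 k) +
       (∑ k ∈ Finset.univ.filter (fun k => E p.2 k), f p.2 k)) / f p.1 p.2) := by
  classical
  set RHS := (arcs E).sup' harcs (fun p =>
      ((∑ k ∈ Finset.univ.filter (fun k => E p.1 k), f p.1 k) +
       (∑ k ∈ Finset.univ.filter (fun k => E p.2 k), f p.2 k)) / f p.1 p.2) with hRHS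
  have harc_mem : ∀ p : Fin n × Fin n, p ∈ arcs E ↔ E p.1 p.2 := by
    intro p; simp [arcs]
  have hRHS0 : 0 ≤ RHS := by
    obtain ⟨p, hp⟩ := harcs
    refine le_trans ?_ (Finset.le_sup' _ hp)
    have hE : E p.1 p.2 := (harc_mem p).mp hp
    apply div_nonneg _ (le_of_lt (hfpos _ _ hE))
    have h1 : (0:ℝ) ≤ ∑ k ∈ Finset.univ.filter (fun k => E p.1 k), f p.1 k :=
      Finset.sum_nonneg fun k _ => hf _ _
    have h2 : (0:ℝ) ≤ ∑ k ∈ Finset.univ.filter (fun k => E p.2 k), f p.2 k :=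
      Finset.sum_nonneg fun k _ => hf _ _
    linarith
  rw [qG, specRadR, specRad]
  apply Real.sSup_le _ hRHS0
  rintro x ⟨μ, hμ, rfl⟩
  by_cases hμ0 : μ = 0
  · simpa [hμ0] using hRHS0
  set M := (Qmat E).map Complex.ofReal with hM
  -- get an eigenvector
  have hnu : ¬ IsUnit (algebraMap ℂ (Matrix (Fin n) (Fin n) ℂ) μ - M) := spectrum.mem_iff.mp hμ
  have hdet : (algebraMap ℂ (Matrix (Fin n) (Fin n) ℂ) μ - M).det = 0 := by
    by_contra h
    exact hnu ((Matrix.isUnit_iff_isUnit_det _).mpr (isUnit_iff_ne_zero.mpr h))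
  obtain ⟨v, hv0, hv⟩ := (Matrix.exists_mulVec_eq_zero_iff).mpr hdet
  have heig : ∀ i, M.mulVec v i = μ * v i := by
    intro i
    have h1 : (algebraMap ℂ (Matrix (Fin n) (Fin n) ℂ) μ - M).mulVec v i = 0 := by
      rw [hv]; rfl
    rw [Matrix.sub_mulVec, Algebra.algebraMap_eq_smul_one, Matrix.smul_mulVec,
      Matrix.one_mulVec] at h1
    have := sub_eq_zero.mp h1
    simpa using this.symm
  -- the key combinatorial identity
  have key : ∀ i, ∑ l ∈ Finset.univ.filter (fun l => E i l), (v i + v l) = μ * v i := by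
    intro i
    have hMe : ∀ j, M i j = (if i = j then ((outdeg E i : ℝ) : ℂ) else 0) +
        (if E i j then 1 else 0) := by
      intro j
      simp only [hM, Matrix.map_apply, Qmat, Matrix.add_apply, Matrix.diagonal_apply, adjM]
      push_cast
      split_ifs <;> simp
    have h1 : M.mulVec v i = (outdeg E i : ℂ) * v i +
        ∑ l ∈ Finset.univ.filter (fun l => E i l), v l := by
      rw [Matrix.mulVec, dotProduct]
      simp only [hMe, add_mul]
      rw [Finset.sum_add_distrib]
      congr 1
      · simp [Finset.sum_ite_eq]
      · rw [Finset.sum_filter]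
        apply Finset.sum_congr rfl
        intro j _
        split_ifs <;> simp
    rw [Finset.sum_add_distrib, Finset.sum_const, nsmul_eq_mul]
    rw [← heig i, h1, outdeg]
  -- y nonzero somewhere on arcs
  set y : Fin n × Fin n → ℂ := fun p => v p.1 + v p.2 with hy
  have hy0 : ∃ p ∈ arcs E, y p ≠ 0 := by
    by_contra h
    push_neg at h
    apply hv0
    funext i
    have h1 : μ * v i = 0 := by
      rw [← key i]
      apply Finset.sum_eq_zero
      intro l hl
      exact h (i, l) ((harc_mem (i, l)).mpr (Finset.mem_filter.mp hl).2)
    simpa [hμ0] using h1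
  obtain ⟨p0, hp0, hyp0⟩ := hy0
  set g : Fin n × Fin n → ℝ := fun p => ‖y p‖ / f p.1 p.2 with hg
  obtain ⟨p, hp, hpmax⟩ := Finset.exists_mem_eq_sup' harcs g
  set t := g p with ht
  have hEp : E p.1 p.2 := (harc_mem p).mp hp
  have hfp : 0 < f p.1 p.2 := hfpos _ _ hEp
  have htpos : 0 < t := by
    have h1 : 0 < g p0 := by
      apply div_pos _ (hfpos _ _ ((harc_mem p0).mp hp0))
      simpa using hyp0
    exact lt_of_lt_of_le h1 (hpmax ▸ Finset.le_sup' g hp0)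
  have hbound : ∀ q ∈ arcs E, ‖y q‖ ≤ t * f q.1 q.2 := by
    intro q hq
    have h1 : g q ≤ t := hpmax ▸ Finset.le_sup' g hq
    rw [hg] at h1
    rw [div_le_iff₀ (hfpos _ _ ((harc_mem q).mp hq))] at h1
    linarith [h1]
  have hyeq : ‖y p‖ = t * f p.1 p.2 := by
    rw [ht, hg]
    field_simp
  -- main estimate
  have hmain : ‖μ‖ * (t * f p.1 p.2) ≤
      t * ((∑ k ∈ Finset.univ.filter (fun k => E p.1 k), f p.1 k) +
           (∑ k ∈ Finset.univ.filter (fun k => E p.2 k), f p.2 k)) := by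
    have hsum : μ * y p = (∑ l ∈ Finset.univ.filter (fun l => E p.1 l), y (p.1, l)) +
        (∑ l ∈ Finset.univ.filter (fun l => E p.2 l), y (p.2, l)) := by
      rw [hy]
      simp only [mul_add]
      rw [← key p.1, ← key p.2]
    calc ‖μ‖ * (t * f p.1 p.2) = ‖μ * y p‖ := by
          rw [norm_mul, hyeq]
      _ ≤ (∑ l ∈ Finset.univ.filter (fun l => E p.1 l), ‖y (p.1, l)‖) +
          (∑ l ∈ Finset.univ.filter (fun l => E p.2 l), ‖y (p.2, l)‖) := by
          rw [hsum]
          refine le_trans (norm_add_le _ _) ?_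
          gcongr <;> exact norm_sum_le _ _
      _ ≤ (∑ l ∈ Finset.univ.filter (fun l => E p.1 l), t * f p.1 l) +
          (∑ l ∈ Finset.univ.filter (fun l => E p.2 l), t * f p.2 l) := by
          gcongr with l hl l hl
          · exact hbound (p.1, l) ((harc_mem (p.1, l)).mpr (Finset.mem_filter.mp hl).2)
          · exact hbound (p.2, l) ((harc_mem (p.2, l)).mpr (Finset.mem_filter.mp hl).2)
      _ = t * ((∑ k ∈ Finset.univ.filter (fun k => E p.1 k), f p.1 k) +
           (∑ k ∈ Finset.univ.filter (fun k => E p.2 k), f p.2 k)) := by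
          rw [← Finset.mul_sum, ← Finset.mul_sum, mul_add]
  have h2 : ‖μ‖ ≤
      ((∑ k ∈ Finset.univ.filter (fun k => E p.1 k), f p.1 k) +
       (∑ k ∈ Finset.univ.filter (fun k => E p.2 k), f p.2 k)) / f p.1 p.2 := by
    rw [le_div_iff₀ hfp]
    nlinarith [hmain, htpos]
  rw [hRHS]
  exact le_trans h2 (Finset.le_sup' (fun q : Fin n × Fin n =>
      ((∑ k ∈ Finset.univ.filter (fun k => E q.1 k), f q.1 k) +
       (∑ k ∈ Finset.univ.filter (fun k => E q.2 k), f q.2 k)) / f q.1 q.2) hp)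
end

section
/- Let G be a digraph in which every vertex has positive outdegree. Then q(G) ≤ max over arcs (v_i,v_j) of ( d_i^+·sqrt(m_i^+/d_j^+) + d_j^+·sqrt(m_j^+/d_i^+) ). -/
open Matrix Finset

lemma eigvec_of_mem_spectrum {n : ℕ} (M : Matrix (Fin n) (Fin n) ℂ) {μ : ℂ}
    (hμ : μ ∈ spectrum ℂ M) : ∃ x : Fin n → ℂ, x ≠ 0 ∧ M.mulVec x = μ • x := by
  rw [spectrum.mem_iff, Matrix.isUnit_iff_isUnit_det, isUnit_iff_ne_zero, not_not,
    ← Matrix.exists_mulVec_eq_zero_iff] at hμ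
  obtain ⟨v, hv0, hv⟩ := hμ
  refine ⟨v, hv0, ?_⟩
  rw [Matrix.sub_mulVec] at hv
  have h1 : (algebraMap ℂ (Matrix (Fin n) (Fin n) ℂ)) μ *ᵥ v = μ • v := by
    rw [Matrix.algebraMap_eq_diagonal]
    ext i
    simp [Matrix.mulVec_diagonal]
  rw [h1] at hv
  exact (sub_eq_zero.mp hv).symm

lemma key_identity {n : ℕ} (E : Fin n → Fin n → Prop) [DecidableRel E]
    (x : Fin n → ℂ) (μ : ℂ)
    (hxe : ((Qmat E).map Complex.ofReal).mulVec x = μ • x) (v : Fin n) :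
    μ * x v = ∑ k ∈ Finset.univ.filter (fun k => E v k), (x v + x k) := by
  have h2 := congrFun hxe v
  have h3 : (((Qmat E).map Complex.ofReal).mulVec x) v
      = ∑ j, ((Qmat E v j : ℝ) : ℂ) * x j := by
    simp [Matrix.mulVec, dotProduct, Matrix.map_apply]
  have h4 : ∑ j, ((Qmat E v j : ℝ) : ℂ) * x j
      = ((outdeg E v : ℂ)) * x v + ∑ k ∈ Finset.univ.filter (fun k => E v k), x k := by
    simp only [Qmat, Matrix.add_apply, Matrix.diagonal_apply, adjM]
    push_cast [apply_ite (Complex.ofReal)]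
    have he : ∀ j, ((if v = j then ((outdeg E v : ℂ)) else 0) + if E v j then 1 else 0) * x j
        = (if v = j then ((outdeg E v : ℂ)) * x j else 0) + (if E v j then x j else 0) :=
      fun j => by split_ifs <;> ring
    rw [Finset.sum_congr rfl fun j _ => he j, Finset.sum_add_distrib, Finset.sum_ite_eq,
      Finset.sum_filter]
    simp
  have h5 : ((outdeg E v : ℂ)) * x v
      = ∑ _k ∈ Finset.univ.filter (fun k => E v k), x v := by
    rw [Finset.sum_const, nsmul_eq_mul]
    norm_num [outdeg]
  rw [h3] at h2
  push_cast at h2 h4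
  rw [h4, h5] at h2
  simp only [Pi.smul_apply, smul_eq_mul] at h2
  rw [← h2, ← Finset.sum_add_distrib]

/-- `q(G) ≤ max over arcs of d_i⁺√(m_i⁺/d_j⁺) + d_j⁺√(m_j⁺/d_i⁺)`. -/
theorem stmt_9 {n : ℕ} (E : Fin n → Fin n → Prop) [DecidableRel E]
    (hloop : ∀ i, ¬ E i i) (hdeg : ∀ i, 0 < outdeg E i) (harcs : (arcs E).Nonempty) :
    qG E ≤ (arcs E).sup' harcs (fun p =>
      (outdeg E p.1 : ℝ) * Real.sqrt (m2 E p.1 / (outdeg E p.2 : ℝ)) +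
      (outdeg E p.2 : ℝ) * Real.sqrt (m2 E p.2 / (outdeg E p.1 : ℝ))) := by
  classical
  set d : Fin n → ℝ := fun v => (outdeg E v : ℝ) with hd
  have hdpos : ∀ v, 0 < d v := fun v => by simp only [hd]; exact_mod_cast hdeg v
  set w : Fin n → ℝ := fun v => Real.sqrt (d v) with hw
  have hwpos : ∀ v, 0 < w v := fun v => Real.sqrt_pos.mpr (hdpos v)
  set N : Fin n → Finset (Fin n) := fun v => Finset.univ.filter (fun k => E v k) with hN
  set P : Fin n → ℝ := fun v => ∑ k ∈ N v, d k with hP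
  have hPnn : ∀ v, 0 ≤ P v := fun v => Finset.sum_nonneg fun k _ => (hdpos k).le
  set T : Fin n × Fin n → ℝ := fun p =>
      (outdeg E p.1 : ℝ) * Real.sqrt (m2 E p.1 / (outdeg E p.2 : ℝ)) +
      (outdeg E p.2 : ℝ) * Real.sqrt (m2 E p.2 / (outdeg E p.1 : ℝ)) with hT
  -- alternative form of each term of T
  have hTform : ∀ a b : Fin n, d a * Real.sqrt (m2 E a / d b)
      = Real.sqrt (d a * P a) / w b := by
    intro a b
    have h1 : d a * Real.sqrt (m2 E a / d b) = Real.sqrt (d a ^ 2 * (m2 E a / d b)) := by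
      rw [Real.sqrt_mul (by positivity), Real.sqrt_sq (hdpos a).le]
    have h2 : m2 E a = P a / d a := by rw [m2]
    have h3 : d a ^ 2 * (m2 E a / d b) = (d a * P a) / d b := by
      have ha := (hdpos a).ne'
      have hb := (hdpos b).ne'
      rw [h2]
      field_simp
    rw [h1, h3, Real.sqrt_div (by positivity)]
  -- nonnegativity of the sup
  obtain ⟨p0, hp0⟩ := harcs
  have hRnn : (0:ℝ) ≤ (arcs E).sup' ⟨p0, hp0⟩ T := by
    refine le_trans ?_ (Finset.le_sup' T hp0)
    positivity
  rw [qG, specRadR, specRad]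
  refine Real.sSup_le ?_ hRnn
  rintro r ⟨μ, hμ, rfl⟩
  obtain ⟨x, hx0, hxe⟩ := eigvec_of_mem_spectrum _ hμ
  set z : Fin n → ℝ := fun v => ‖x v‖ with hz
  have hznn : ∀ v, 0 ≤ z v := fun v => norm_nonneg _
  have hkey : ∀ v, ‖μ‖ * z v ≤ ∑ k ∈ N v, (z v + z k) := by
    intro v
    calc ‖μ‖ * z v = ‖μ * x v‖ := (norm_mul _ _).symm
      _ = ‖∑ k ∈ N v, (x v + x k)‖ := by rw [key_identity E x μ hxe v]
      _ ≤ ∑ k ∈ N v, ‖x v + x k‖ := norm_sum_le _ _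
      _ ≤ ∑ k ∈ N v, (z v + z k) :=
          Finset.sum_le_sum fun k _ => norm_add_le _ _
  -- choose the maximizing arc
  obtain ⟨p, hpmem, hpmax⟩ := Finset.exists_max_image (arcs E)
    (fun q => (z q.1 + z q.2) / (w q.1 * w q.2)) ⟨p0, hp0⟩
  set i := p.1 with hi
  set j := p.2 with hj
  set G := (z i + z j) / (w i * w j) with hG
  have hGmax : ∀ a b : Fin n, E a b → z a + z b ≤ G * (w a * w b) := by
    intro a b hab
    have hmem : (a, b) ∈ arcs E := by simp [arcs, hab]
    have h1 := hpmax _ hmem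
    calc z a + z b = ((z a + z b) / (w a * w b)) * (w a * w b) :=
          (div_mul_cancel₀ _ (mul_pos (hwpos a) (hwpos b)).ne').symm
      _ ≤ G * (w a * w b) :=
          mul_le_mul_of_nonneg_right h1 (by positivity)
  have hGpos : 0 < G := by
    obtain ⟨a, ha⟩ := Function.ne_iff.mp hx0
    have hza : 0 < z a := norm_pos_iff.mpr (by simpa using ha)
    obtain ⟨b, hb⟩ := Finset.card_pos.mp (show 0 < (N a).card from hdeg a)
    have hEab : E a b := by simpa [hN] using hb
    have hmem : (a, b) ∈ arcs E := by simp [arcs, hEab]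
    refine lt_of_lt_of_le ?_ (hpmax _ hmem)
    exact div_pos (by have := hznn b; linarith) (mul_pos (hwpos a) (hwpos b))
  have hEij : E i j := by simpa [arcs] using hpmem
  -- combined step bound
  have hstep : ∀ v, ‖μ‖ * z v ≤ G * (w v * ∑ k ∈ N v, w k) := by
    intro v
    refine (hkey v).trans ?_
    calc ∑ k ∈ N v, (z v + z k) ≤ ∑ k ∈ N v, G * (w v * w k) :=
          Finset.sum_le_sum fun k hk => hGmax v k (by simpa [hN] using hk)
      _ = G * (w v * ∑ k ∈ N v, w k) := by
          rw [Finset.mul_sum, Finset.mul_sum]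
  -- Cauchy-Schwarz
  have hcs : ∀ v, ∑ k ∈ N v, w k ≤ Real.sqrt (d v * P v) := by
    intro v
    have h1 : (∑ k ∈ N v, w k) ^ 2 ≤ (N v).card * ∑ k ∈ N v, (w k) ^ 2 :=
      sq_sum_le_card_mul_sum_sq
    have h2 : ∑ k ∈ N v, (w k) ^ 2 = P v :=
      Finset.sum_congr rfl fun k _ => Real.sq_sqrt (hdpos k).le
    have h3 : ((N v).card : ℝ) = d v := by rw [hd]; norm_num [outdeg, hN]
    have h4 : (∑ k ∈ N v, w k) ^ 2 ≤ d v * P v := by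
      rw [← h3, ← h2]; exact h1
    have h5 : 0 ≤ ∑ k ∈ N v, w k := Finset.sum_nonneg fun k _ => (hwpos k).le
    calc ∑ k ∈ N v, w k = Real.sqrt ((∑ k ∈ N v, w k) ^ 2) := (Real.sqrt_sq h5).symm
      _ ≤ Real.sqrt (d v * P v) := Real.sqrt_le_sqrt h4
  -- combine at the arc (i, j)
  have hzij : G * (w i * w j) = z i + z j := by
    rw [hG]; exact div_mul_cancel₀ _ (mul_pos (hwpos i) (hwpos j)).ne'
  have hsum : ‖μ‖ * (G * (w i * w j))
      ≤ G * (w i * ∑ k ∈ N i, w k + w j * ∑ k ∈ N j, w k) := by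
    rw [hzij, mul_add, mul_add]
    exact add_le_add (hstep i) (hstep j)
  have hmu : ‖μ‖ * (w i * w j)
      ≤ w i * ∑ k ∈ N i, w k + w j * ∑ k ∈ N j, w k := by
    have h6 : G * (‖μ‖ * (w i * w j))
        ≤ G * (w i * ∑ k ∈ N i, w k + w j * ∑ k ∈ N j, w k) := by
      calc G * (‖μ‖ * (w i * w j)) = ‖μ‖ * (G * (w i * w j)) := by ring
        _ ≤ _ := hsum
    exact le_of_mul_le_mul_left h6 hGpos
  have hmu2 : ‖μ‖ * (w i * w j)
      ≤ w i * Real.sqrt (d i * P i) + w j * Real.sqrt (d j * P j) := by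
    refine hmu.trans (add_le_add ?_ ?_)
    · exact mul_le_mul_of_nonneg_left (hcs i) (hwpos i).le
    · exact mul_le_mul_of_nonneg_left (hcs j) (hwpos j).le
  have hfin : ‖μ‖ ≤ T p := by
    have hTp : T p = (w i * Real.sqrt (d i * P i) + w j * Real.sqrt (d j * P j))
        / (w i * w j) := by
      show d i * Real.sqrt (m2 E i / d j) + d j * Real.sqrt (m2 E j / d i) = _
      rw [hTform i j, hTform j i]
      have hwi := (hwpos i).ne'
      have hwj := (hwpos j).ne'
      field_simp
    rw [hTp, le_div_iff₀ (mul_pos (hwpos i) (hwpos j))]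
    exact hmu2
  exact hfin.trans (Finset.le_sup' T hpmem)
end

section
/- Let G be a digraph with at least one arc. Then q(G) ≤ max over arcs (v_i,v_j) of ( d_i^+(d_i^+ + m_i^+) + d_j^+(d_j^+ + m_j^+) ) / ( d_i^+ + d_j^+ ). -/
open Matrix Finset

section KEY
variable {n : ℕ} (E : Fin n → Fin n → Prop) [DecidableRel E]

lemma m2_nonneg (i : Fin n) : 0 ≤ m2 E i := by
  unfold m2
  apply div_nonneg (Finset.sum_nonneg fun j _ => by positivity) (by positivity)

lemma hdm (i : Fin n) :
    (outdeg E i : ℝ) * m2 E i = ∑ j ∈ Finset.univ.filter (fun j => E i j), (outdeg E j : ℝ) := by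
  rcases Nat.eq_zero_or_pos (outdeg E i) with h | h
  · have he : Finset.univ.filter (fun j => E i j) = ∅ := Finset.card_eq_zero.mp h
    simp [m2, he]
  · have : (outdeg E i : ℝ) ≠ 0 := by positivity
    rw [m2, mul_div_cancel₀ _ this]

lemma outdeg_pos {i j : Fin n} (h : E i j) : 0 < outdeg E i :=
  Finset.card_pos.mpr ⟨j, by simp [h]⟩

set_option maxHeartbeats 1000000 in
lemma key (harcs : (arcs E).Nonempty) (lam : ℝ) (y : Fin n → ℝ)
    (hy : ∀ i, 0 ≤ y i) (hne : ∃ i, 0 < y i)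
    (h : ∀ i, (lam - (outdeg E i : ℝ)) * y i ≤ ∑ j ∈ Finset.univ.filter (fun j => E i j), y j) :
    lam ≤ (arcs E).sup' harcs (fun p =>
      ((outdeg E p.1 : ℝ) * ((outdeg E p.1 : ℝ) + m2 E p.1) +
       (outdeg E p.2 : ℝ) * ((outdeg E p.2 : ℝ) + m2 E p.2)) /
        ((outdeg E p.1 : ℝ) + (outdeg E p.2 : ℝ))) := by
  classical
  set f : Fin n × Fin n → ℝ := fun p =>
      ((outdeg E p.1 : ℝ) * ((outdeg E p.1 : ℝ) + m2 E p.1) +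
       (outdeg E p.2 : ℝ) * ((outdeg E p.2 : ℝ) + m2 E p.2)) /
        ((outdeg E p.1 : ℝ) + (outdeg E p.2 : ℝ)) with hf
  set B := (arcs E).sup' harcs f with hB

  clear_value f B
  have hfpos : ∀ p ∈ arcs E, 0 < f p := by
    intro p hp
    simp only [hf]
    have hE : E p.1 p.2 := (Finset.mem_filter.mp hp).2
    have h1 : 0 < (outdeg E p.1 : ℝ) := by exact_mod_cast outdeg_pos E hE
    have hm1 := m2_nonneg E p.1
    have hm2 := m2_nonneg E p.2
    have h2 : (0:ℝ) ≤ (outdeg E p.2 : ℝ) := by positivity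
    apply div_pos (by nlinarith) (by linarith)
  have hB0 : 0 < B := by
    obtain ⟨p0, hp0⟩ := harcs
    rw [hB]
    exact lt_of_lt_of_le (hfpos p0 hp0) (Finset.le_sup' f hp0)
  rcases le_or_gt lam 0 with hlam | hlam
  · linarith
  -- zero outdegree forces y = 0
  have h0 : ∀ i, outdeg E i = 0 → y i = 0 := by
    intro i hi
    have hfe : Finset.univ.filter (fun j => E i j) = ∅ := Finset.card_eq_zero.mp hi
    have hi' := h i
    rw [hfe, hi] at hi'
    simp at hi'
    refine le_antisymm ?_ (hy i)
    nlinarith [hy i]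
  -- the maximizing vertex u
  set S := Finset.univ.filter (fun i => 0 < outdeg E i) with hSdef
  have hS : S.Nonempty := by
    obtain ⟨i0, hi0⟩ := hne
    refine ⟨i0, Finset.mem_filter.mpr ⟨Finset.mem_univ _, ?_⟩⟩
    rcases Nat.eq_zero_or_pos (outdeg E i0) with hc | hc
    · exact absurd (h0 i0 hc) (by linarith)
    · exact hc
  set t := S.sup' hS (fun i => y i / (outdeg E i : ℝ)) with ht
  clear_value t
  obtain ⟨u, huS, hut⟩ := Finset.exists_mem_eq_sup' hS (fun i => y i / (outdeg E i : ℝ))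
  have hdu : 0 < outdeg E u := (Finset.mem_filter.mp huS).2
  have hdu' : (0:ℝ) < (outdeg E u : ℝ) := by exact_mod_cast hdu
  have hyu : y u = t * (outdeg E u : ℝ) := by
    rw [ht, hut]; field_simp
  have ht_all : ∀ k, y k ≤ t * (outdeg E k : ℝ) := by
    intro k
    rcases Nat.eq_zero_or_pos (outdeg E k) with hk | hk
    · simp [h0 k hk, hk]
    · have hkS : k ∈ S := Finset.mem_filter.mpr ⟨Finset.mem_univ _, hk⟩
      have hle := Finset.le_sup' (fun i => y i / (outdeg E i : ℝ)) hkS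
      rw [← ht] at hle
      have hdk' : (0:ℝ) < (outdeg E k : ℝ) := by exact_mod_cast hk
      calc y k = (y k / (outdeg E k : ℝ)) * (outdeg E k : ℝ) := by field_simp
        _ ≤ t * (outdeg E k : ℝ) := mul_le_mul_of_nonneg_right hle (le_of_lt hdk')
  have ht0 : 0 < t := by
    obtain ⟨i0, hi0⟩ := hne
    have hd0 : 0 < outdeg E i0 := by
      rcases Nat.eq_zero_or_pos (outdeg E i0) with hc | hc
      · exact absurd (h0 i0 hc) (by linarith)
      · exact hc
    have hi0S : i0 ∈ S := Finset.mem_filter.mpr ⟨Finset.mem_univ _, hd0⟩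
    have hle := Finset.le_sup' (fun i => y i / (outdeg E i : ℝ)) hi0S
    rw [← ht] at hle
    have hd0' : (0:ℝ) < (outdeg E i0 : ℝ) := by exact_mod_cast hd0
    have : 0 < y i0 / (outdeg E i0 : ℝ) := by positivity
    linarith
  -- the set of out-neighbours of u
  have hNu : (Finset.univ.filter (fun j => E u j)).Nonempty := Finset.card_pos.mp hdu
  have hcard : (Finset.univ.filter (fun j => E u j)).card = outdeg E u := rfl
  have hru : lam ≤ (outdeg E u : ℝ) + m2 E u := by
    have hsumu : ∑ j ∈ Finset.univ.filter (fun j => E u j), y j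
        ≤ t * ((outdeg E u : ℝ) * m2 E u) := by
      rw [hdm E u, Finset.mul_sum]
      exact Finset.sum_le_sum fun j _ => ht_all j
    have h1 := h u
    rw [hyu] at h1
    nlinarith [mul_pos ht0 hdu']
  -- main: there exists an out-neighbour k with lam ≤ f (u,k)
  have hex : ∃ k ∈ Finset.univ.filter (fun j => E u j), lam ≤ f (u, k) := by
    by_contra hcon
    push_neg at hcon
    set ε := (outdeg E u : ℝ) + m2 E u - lam with hεdef
    clear_value ε
    have hε : 0 ≤ ε := by rw [hεdef]; linarith
    -- every out-neighbour has positive outdegree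
    have hdk : ∀ k ∈ Finset.univ.filter (fun j => E u j), 0 < (outdeg E k : ℝ) := by
      intro k hk
      rcases Nat.eq_zero_or_pos (outdeg E k) with hk0 | hk0
      · exfalso
        have hfk := hcon k hk
        have hm2k : m2 E k = 0 := by simp [m2, hk0]
        have hfeq : f (u, k) = (outdeg E u : ℝ) + m2 E u := by
          simp only [hf, hk0, hm2k]
          push_cast
          rw [zero_mul, add_zero, add_zero]
          field_simp
        rw [hfeq] at hfk
        linarith
      · exact_mod_cast hk0
    -- key per-neighbour inequality
    have hck : ∀ k ∈ Finset.univ.filter (fun j => E u j),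
        (outdeg E u : ℝ) * ε / (outdeg E k : ℝ) < lam - (outdeg E k : ℝ) - m2 E k := by
      intro k hk
      have hdk' := hdk k hk
      have hfk := hcon k hk
      have hden : 0 < (outdeg E u : ℝ) + (outdeg E k : ℝ) := by linarith
      rw [hf] at hfk
      simp only at hfk
      rw [div_lt_iff₀ hden] at hfk
      rw [div_lt_iff₀ hdk', hεdef]
      nlinarith
    have hLk : ∀ k ∈ Finset.univ.filter (fun j => E u j), 0 < lam - (outdeg E k : ℝ) := by
      intro k hk
      have h1 := hck k hk
      have h2 : 0 ≤ (outdeg E u : ℝ) * ε / (outdeg E k : ℝ) := by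
        apply div_nonneg (by positivity) (le_of_lt (hdk k hk))
      have := m2_nonneg E k
      linarith
    -- per-neighbour strict bound on y k
    have hyk : ∀ k ∈ Finset.univ.filter (fun j => E u j),
        y k < t * (outdeg E k : ℝ) - t * ((outdeg E u : ℝ) * ε) / (lam - (outdeg E k : ℝ)) := by
      intro k hk
      have hdk' := hdk k hk
      have hL' := hLk k hk
      have hsum : (lam - (outdeg E k : ℝ)) * y k ≤ t * ((outdeg E k : ℝ) * m2 E k) := by
        refine le_trans (h k) ?_
        rw [hdm E k, Finset.mul_sum]
        exact Finset.sum_le_sum fun j _ => ht_all j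
      have hmk := hck k hk
      have key1 : (lam - (outdeg E k : ℝ)) * y k
          < t * ((outdeg E k : ℝ) * (lam - (outdeg E k : ℝ)) - (outdeg E u : ℝ) * ε) := by
        have hq : (outdeg E k : ℝ) * m2 E k
            < (outdeg E k : ℝ) * (lam - (outdeg E k : ℝ)) - (outdeg E u : ℝ) * ε := by
          rw [div_lt_iff₀ hdk'] at hmk
          nlinarith
        nlinarith
      calc y k < (t * ((outdeg E k : ℝ) * (lam - (outdeg E k : ℝ)) - (outdeg E u : ℝ) * ε))
            / (lam - (outdeg E k : ℝ)) := by
            rw [lt_div_iff₀ hL']; linarith [key1]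
        _ = t * (outdeg E k : ℝ) - t * ((outdeg E u : ℝ) * ε) / (lam - (outdeg E k : ℝ)) := by
            field_simp
    -- sum up
    set H := ∑ k ∈ Finset.univ.filter (fun j => E u j), 1 / (lam - (outdeg E k : ℝ)) with hH
    clear_value H
    have hsum1 : ∑ k ∈ Finset.univ.filter (fun j => E u j), y k
        < t * ((outdeg E u : ℝ) * m2 E u) - t * ((outdeg E u : ℝ) * ε) * H := by
      have hs := Finset.sum_lt_sum_of_nonempty hNu hyk
      have hsplit : ∑ k ∈ Finset.univ.filter (fun j => E u j),
          (t * (outdeg E k : ℝ) - t * ((outdeg E u : ℝ) * ε) / (lam - (outdeg E k : ℝ)))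
          = t * ((outdeg E u : ℝ) * m2 E u) - t * ((outdeg E u : ℝ) * ε) * H := by
        rw [Finset.sum_sub_distrib]
        congr 1
        · rw [hdm E u, Finset.mul_sum]
        · rw [hH, Finset.mul_sum]
          congr 1; ext k
          rw [mul_one_div]
      rw [hsplit] at hs
      exact hs
    have hmain : (lam - (outdeg E u : ℝ)) * (t * (outdeg E u : ℝ))
        < t * ((outdeg E u : ℝ) * m2 E u) - t * ((outdeg E u : ℝ) * ε) * H := by
      have := h u
      rw [hyu] at this
      linarith
    -- tangent-line AM-HM bound : outdeg u / a ≤ H  with a = lam - m2 u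
    set a := lam - m2 E u with ha_def
    clear_value a
    have hsum_lam : ∑ k ∈ Finset.univ.filter (fun j => E u j), (lam - (outdeg E k : ℝ))
        = (outdeg E u : ℝ) * a := by
      rw [Finset.sum_sub_distrib, Finset.sum_const, hcard, nsmul_eq_mul, ← hdm E u, ha_def]
      ring
    have hapos : 0 < a := by
      have hsp : 0 < ∑ k ∈ Finset.univ.filter (fun j => E u j), (lam - (outdeg E k : ℝ)) :=
        Finset.sum_pos hLk hNu
      rw [hsum_lam] at hsp
      nlinarith
    have hHa : (outdeg E u : ℝ) / a ≤ H := by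
      have htan : ∀ k ∈ Finset.univ.filter (fun j => E u j),
          (2 * a - (lam - (outdeg E k : ℝ))) / a ^ 2 ≤ 1 / (lam - (outdeg E k : ℝ)) := by
        intro k hk
        have hL' := hLk k hk
        rw [div_le_div_iff₀ (by positivity) hL']
        nlinarith [sq_nonneg (a - (lam - (outdeg E k : ℝ)))]
      have hsle := Finset.sum_le_sum htan
      rw [← hH] at hsle
      have hLHS : ∑ k ∈ Finset.univ.filter (fun j => E u j),
          (2 * a - (lam - (outdeg E k : ℝ))) / a ^ 2 = (outdeg E u : ℝ) / a := by
        rw [← Finset.sum_div, Finset.sum_sub_distrib, Finset.sum_const, hcard, nsmul_eq_mul,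
          hsum_lam]
        field_simp
        ring
      rw [hLHS] at hsle
      exact hsle
    -- final contradiction
    rcases eq_or_lt_of_le hε with hε0 | hε'
    · subst hε0
      nlinarith [mul_pos ht0 hdu']
    · have hlam_eq : lam = (outdeg E u : ℝ) + m2 E u - ε := by linarith [hεdef.ge, hεdef.le]
      have hH1 : H < 1 := by
        rw [hlam_eq] at hmain
        nlinarith [mul_pos (mul_pos ht0 hdu') hε']
      have hduA : (outdeg E u : ℝ) / a < 1 := lt_of_le_of_lt hHa hH1
      rw [div_lt_one hapos] at hduA
      rw [ha_def] at hduA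
      rw [hεdef] at hε'
      linarith
  obtain ⟨k, hk, hlk⟩ := hex
  have hkarc : (u, k) ∈ arcs E :=
    Finset.mem_filter.mpr ⟨Finset.mem_univ _, (Finset.mem_filter.mp hk).2⟩
  rw [hB]
  exact le_trans hlk (Finset.le_sup' f hkarc)

end KEY

theorem stmt_10 {n : ℕ} (E : Fin n → Fin n → Prop) [DecidableRel E]
    (hloop : ∀ i, ¬ E i i) (harcs : (arcs E).Nonempty) :
    qG E ≤ (arcs E).sup' harcs (fun p =>
      ((outdeg E p.1 : ℝ) * ((outdeg E p.1 : ℝ) + m2 E p.1) +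
       (outdeg E p.2 : ℝ) * ((outdeg E p.2 : ℝ) + m2 E p.2)) /
        ((outdeg E p.1 : ℝ) + (outdeg E p.2 : ℝ))) := by
  classical
  have hBnonneg : 0 ≤ (arcs E).sup' harcs (fun p =>
      ((outdeg E p.1 : ℝ) * ((outdeg E p.1 : ℝ) + m2 E p.1) +
       (outdeg E p.2 : ℝ) * ((outdeg E p.2 : ℝ) + m2 E p.2)) /
        ((outdeg E p.1 : ℝ) + (outdeg E p.2 : ℝ))) := by
    obtain ⟨p0, hp0⟩ := harcs
    refine le_trans ?_ (Finset.le_sup' _ hp0)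
    have h1 := m2_nonneg E p0.1
    have h2 := m2_nonneg E p0.2
    apply div_nonneg
    · have c1 : (0:ℝ) ≤ (outdeg E p0.1 : ℝ) := by positivity
      have c2 : (0:ℝ) ≤ (outdeg E p0.2 : ℝ) := by positivity
      nlinarith
    · positivity
  have hmain : ∀ μ ∈ spectrum ℂ ((Qmat E).map Complex.ofReal),
      ‖μ‖ ≤ (arcs E).sup' harcs (fun p =>
      ((outdeg E p.1 : ℝ) * ((outdeg E p.1 : ℝ) + m2 E p.1) +
       (outdeg E p.2 : ℝ) * ((outdeg E p.2 : ℝ) + m2 E p.2)) /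
        ((outdeg E p.1 : ℝ) + (outdeg E p.2 : ℝ))) := by
    intro μ hμ
    -- obtain an eigenvector
    have h' : μ ∈ spectrum ℂ (Matrix.toLinAlgEquiv' ((Qmat E).map Complex.ofReal)) := by
      rwa [AlgEquiv.spectrum_eq Matrix.toLinAlgEquiv' ((Qmat E).map Complex.ofReal)]
    have h2 : Module.End.HasEigenvalue (Matrix.toLin' ((Qmat E).map Complex.ofReal)) μ :=
      Module.End.hasEigenvalue_iff_mem_spectrum.mpr h'
    obtain ⟨v, hv, hv0⟩ := h2.exists_hasEigenvector
    have hveq : ((Qmat E).map Complex.ofReal).mulVec v = μ • v := by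
      simpa [Matrix.toLin'_apply, Module.End.mem_eigenspace_iff] using hv
    -- apply the key combinatorial lemma to y = |v|
    apply key E harcs (‖μ‖) (fun i => ‖v i‖)
      (fun i => norm_nonneg _)
    · obtain ⟨i, hi⟩ := Function.ne_iff.mp hv0
      exact ⟨i, norm_pos_iff.mpr (by simpa using hi)⟩
    · intro i
      have hrow : μ * v i = ((outdeg E i : ℝ) : ℂ) * v i
          + ∑ j ∈ Finset.univ.filter (fun j => E i j), v j := by
        have h1 := congrFun hveq i
        simp only [Matrix.mulVec, dotProduct, Pi.smul_apply, smul_eq_mul] at h1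
        rw [← h1]
        have hQ : ∀ j, ((Qmat E).map Complex.ofReal) i j * v j
            = (if i = j then ((outdeg E i : ℝ) : ℂ) * v j else 0)
              + (if E i j then v j else 0) := by
          intro j
          simp only [Qmat, Matrix.map_apply, Matrix.add_apply, Matrix.diagonal_apply, adjM]
          push_cast [apply_ite Complex.ofReal]
          split_ifs with h1 h2 <;> ring
        rw [Finset.sum_congr rfl (fun j _ => hQ j), Finset.sum_add_distrib]
        congr 1
        · rw [Finset.sum_ite_eq univ i (fun j => ((outdeg E i : ℝ) : ℂ) * v j)]
          simp
        · rw [Finset.sum_filter]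
      have heq : (μ - ((outdeg E i : ℝ) : ℂ)) * v i
          = ∑ j ∈ Finset.univ.filter (fun j => E i j), v j := by
        rw [sub_mul, hrow]; ring
      have habs : ‖μ - ((outdeg E i : ℝ) : ℂ)‖ * ‖v i‖
          ≤ ∑ j ∈ Finset.univ.filter (fun j => E i j), ‖v j‖ := by
        rw [← norm_mul, heq]
        exact norm_sum_le _ _
      have htri : ‖μ‖ - (outdeg E i : ℝ)
          ≤ ‖μ - ((outdeg E i : ℝ) : ℂ)‖ := by
        have h2 : ‖μ‖ ≤ ‖μ - ((outdeg E i : ℝ) : ℂ)‖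
            + ‖((outdeg E i : ℝ) : ℂ)‖ := by
          calc ‖μ‖
              = ‖(μ - ((outdeg E i : ℝ) : ℂ)) + ((outdeg E i : ℝ) : ℂ)‖ := by ring_nf
            _ ≤ _ := norm_add_le _ _
        rw [Complex.norm_real, Real.norm_eq_abs, abs_of_nonneg (by positivity)] at h2
        linarith
      calc (‖μ‖ - (outdeg E i : ℝ)) * ‖v i‖
          ≤ ‖μ - ((outdeg E i : ℝ) : ℂ)‖ * ‖v i‖ :=
            mul_le_mul_of_nonneg_right htri (norm_nonneg _)
        _ ≤ _ := habs
  show specRad ((Qmat E).map Complex.ofReal) ≤ _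
  apply Real.sSup_le _ hBnonneg
  rintro x ⟨μ, hμ, rfl⟩
  exact hmain μ hμ
end

section
/- Let G be a digraph with at least one arc in which every vertex has positive outdegree. Then q(G) ≤ max over arcs (v_i,v_j) of ( d_i^+·sqrt(d_i^+ + m_i^+) + d_j^+·sqrt(d_j^+ + m_j^+) ) / sqrt(d_i^+ + d_j^+). -/
open Matrix Finset

section Aux

variable {n : ℕ} (E : Fin n → Fin n → Prop) [DecidableRel E]

lemma Qmat_row_sum (w : Fin n → ℝ) (i : Fin n) :
    ∑ j, Qmat E i j * w j = (outdeg E i : ℝ) * w i +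
      ∑ j ∈ Finset.univ.filter (fun j => E i j), w j := by
  simp only [Qmat, Matrix.add_apply, Matrix.diagonal_apply, adjM, add_mul,
    Finset.sum_add_distrib]
  congr 1
  · rw [show (∑ j, (if i = j then (outdeg E i : ℝ) else 0) * w j)
        = ∑ j, if i = j then (outdeg E i : ℝ) * w j else 0 from by simp [ite_mul],
      Finset.sum_ite_eq]
    simp
  · rw [Finset.sum_filter]
    simp [ite_mul]

lemma Qmat_nonneg (i j : Fin n) : 0 ≤ Qmat E i j := by
  simp only [Qmat, Matrix.add_apply, Matrix.diagonal_apply, adjM]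
  positivity

lemma spec_vec {μ : ℂ} (h : μ ∈ spectrum ℂ ((Qmat E).map Complex.ofReal)) :
    ∃ v ≠ 0, ((Qmat E).map Complex.ofReal).mulVec v = μ • v := by
  rw [spectrum.mem_iff, Matrix.isUnit_iff_isUnit_det, isUnit_iff_ne_zero, not_not,
    ← Matrix.exists_mulVec_eq_zero_iff] at h
  obtain ⟨v, hv, hv2⟩ := h
  refine ⟨v, hv, ?_⟩
  rw [Matrix.sub_mulVec, sub_eq_zero, Algebra.algebraMap_eq_smul_one,
    Matrix.smul_mulVec, Matrix.one_mulVec] at hv2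
  exact hv2.symm

end Aux

/-- `q(G) ≤ max over arcs of
(d_i⁺√(d_i⁺+m_i⁺)+d_j⁺√(d_j⁺+m_j⁺))/√(d_i⁺+d_j⁺)`. -/
theorem stmt_11 {n : ℕ} (E : Fin n → Fin n → Prop) [DecidableRel E]
    (hloop : ∀ i, ¬ E i i) (hdeg : ∀ i, 0 < outdeg E i) (harcs : (arcs E).Nonempty) :
    qG E ≤ (arcs E).sup' harcs (fun p =>
      ((outdeg E p.1 : ℝ) * Real.sqrt ((outdeg E p.1 : ℝ) + m2 E p.1) +
       (outdeg E p.2 : ℝ) * Real.sqrt ((outdeg E p.2 : ℝ) + m2 E p.2)) /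
        Real.sqrt ((outdeg E p.1 : ℝ) + (outdeg E p.2 : ℝ))) := by
  classical
  set b := (arcs E).sup' harcs (fun p =>
      ((outdeg E p.1 : ℝ) * Real.sqrt ((outdeg E p.1 : ℝ) + m2 E p.1) +
       (outdeg E p.2 : ℝ) * Real.sqrt ((outdeg E p.2 : ℝ) + m2 E p.2)) /
        Real.sqrt ((outdeg E p.1 : ℝ) + (outdeg E p.2 : ℝ))) with hbdef
  set d : Fin n → ℝ := fun i => (outdeg E i : ℝ) with hddef
  have hd_pos : ∀ i, 0 < d i := fun i => by simpa [hddef] using (Nat.cast_pos (α := ℝ)).mpr (hdeg i)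
  set N : Fin n → Finset (Fin n) := fun i => Finset.univ.filter (fun j => E i j) with hNdef
  have hNcard : ∀ i, ((N i).card : ℝ) = d i := fun i => rfl
  have hNne : ∀ i, (N i).Nonempty := fun i =>
    Finset.card_pos.mp (hdeg i)
  set w : Fin n → ℝ := fun i => ∑ k ∈ N i, Real.sqrt (d i + d k) with hwdef
  have hw_pos : ∀ i, 0 < w i := fun i =>
    Finset.sum_pos (fun k _ => Real.sqrt_pos.mpr (by have := hd_pos i; have := (hd_pos k).le; linarith))
      (hNne i)
  -- m2 nonneg
  have hm2 : ∀ i, d i * (d i + m2 E i) = ∑ k ∈ N i, (d i + d k) := by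
    intro i
    have hm : d i * m2 E i = ∑ k ∈ N i, d k := by
      rw [m2, mul_comm, div_mul_cancel₀ _ (hd_pos i).ne']
    rw [Finset.sum_add_distrib, Finset.sum_const, nsmul_eq_mul, hNcard, mul_add, hm]
  have hm2_nonneg : ∀ i, 0 ≤ d i + m2 E i := by
    intro i
    have h := hm2 i
    have hs : 0 ≤ ∑ k ∈ N i, (d i + d k) :=
      Finset.sum_nonneg fun k _ => by have := (hd_pos i).le; have := (hd_pos k).le; linarith
    nlinarith [hd_pos i]
  -- Cauchy–Schwarz step
  have hCS : ∀ i, w i ≤ d i * Real.sqrt (d i + m2 E i) := by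
    intro i
    have h1 : (w i) ^ 2 ≤ ((N i).card : ℝ) * ∑ k ∈ N i, (Real.sqrt (d i + d k)) ^ 2 := by
      exact_mod_cast sq_sum_le_card_mul_sum_sq (s := N i) (f := fun k => Real.sqrt (d i + d k))
    have h2 : ∑ k ∈ N i, (Real.sqrt (d i + d k)) ^ 2 = ∑ k ∈ N i, (d i + d k) :=
      Finset.sum_congr rfl fun k _ => Real.sq_sqrt (by have := (hd_pos i).le; have := (hd_pos k).le; linarith)
    rw [h2, hNcard, ← hm2 i] at h1
    have h3 : (w i) ^ 2 ≤ (d i * Real.sqrt (d i + m2 E i)) ^ 2 := by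
      rw [mul_pow, Real.sq_sqrt (hm2_nonneg i)]
      nlinarith
    calc w i = Real.sqrt ((w i) ^ 2) := (Real.sqrt_sq (hw_pos i).le).symm
      _ ≤ Real.sqrt ((d i * Real.sqrt (d i + m2 E i)) ^ 2) := Real.sqrt_le_sqrt h3
      _ = d i * Real.sqrt (d i + m2 E i) := Real.sqrt_sq (by positivity)
  -- arc inequality
  have hArc : ∀ i j, E i j → w i + w j ≤ b * Real.sqrt (d i + d j) := by
    intro i j hij
    have hmem : (i, j) ∈ arcs E := by simp [arcs, hij]
    have hle := Finset.le_sup' (f := fun p =>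
      ((outdeg E p.1 : ℝ) * Real.sqrt ((outdeg E p.1 : ℝ) + m2 E p.1) +
       (outdeg E p.2 : ℝ) * Real.sqrt ((outdeg E p.2 : ℝ) + m2 E p.2)) /
        Real.sqrt ((outdeg E p.1 : ℝ) + (outdeg E p.2 : ℝ))) hmem
    have hsq : 0 < Real.sqrt (d i + d j) :=
      Real.sqrt_pos.mpr (by have := hd_pos i; have := (hd_pos j).le; linarith)
    have h4 : w i + w j ≤ d i * Real.sqrt (d i + m2 E i) + d j * Real.sqrt (d j + m2 E j) :=
      add_le_add (hCS i) (hCS j)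
    have h5 : d i * Real.sqrt (d i + m2 E i) + d j * Real.sqrt (d j + m2 E j)
        ≤ b * Real.sqrt (d i + d j) := by
      rw [← div_le_iff₀ hsq]
      exact hle
    linarith
  -- Qw ≤ b w
  have hQw : ∀ i, ∑ j, Qmat E i j * w j ≤ b * w i := by
    intro i
    rw [Qmat_row_sum]
    have h6 : ∑ j ∈ N i, w j ≤ ∑ j ∈ N i, (b * Real.sqrt (d i + d j) - w i) := by
      refine Finset.sum_le_sum fun j hj => ?_
      have hij : E i j := by simpa [hNdef] using hj
      have := hArc i j hij
      linarith
    have h7 : ∑ j ∈ N i, (b * Real.sqrt (d i + d j) - w i)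
        = b * w i - d i * w i := by
      rw [Finset.sum_sub_distrib, Finset.sum_const, nsmul_eq_mul, hNcard, hwdef,
        ← Finset.mul_sum]
    have := h6.trans_eq h7
    have hid : (outdeg E i : ℝ) = d i := rfl
    rw [hid]
    linarith
  have hb_nonneg : 0 ≤ b := by
    obtain ⟨p, hp⟩ := harcs
    refine le_trans ?_ (Finset.le_sup' _ hp)
    positivity
  -- eigenvalue bound
  have hEig : ∀ μ ∈ spectrum ℂ ((Qmat E).map Complex.ofReal), ‖μ‖ ≤ b := by
    intro μ hμ
    obtain ⟨v, hv0, hv⟩ := spec_vec E hμ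
    set z : Fin n → ℝ := fun i => ‖v i‖ with hzdef
    obtain ⟨p, hp⟩ := harcs
    have hne : (Finset.univ : Finset (Fin n)).Nonempty := ⟨p.1, Finset.mem_univ _⟩
    obtain ⟨i0, _, hi0⟩ := Finset.exists_max_image Finset.univ (fun i => z i / w i) hne
    set r := z i0 / w i0 with hrdef
    have hr_nonneg : 0 ≤ r := div_nonneg (norm_nonneg _) (hw_pos i0).le
    have hz_le : ∀ j, z j ≤ r * w j := by
      intro j
      have := hi0 j (Finset.mem_univ j)
      rwa [div_le_iff₀ (hw_pos j)] at this
      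
    have hr_pos : 0 < r := by
      obtain ⟨j, hj⟩ := Function.ne_iff.mp hv0
      have hzj : 0 < z j := norm_pos_iff.mpr hj
      have := hz_le j
      nlinarith [hw_pos j]
    have hzi0 : z i0 = r * w i0 := (div_mul_cancel₀ _ (hw_pos i0).ne').symm
    have hzi0_pos : 0 < z i0 := by rw [hzi0]; exact mul_pos hr_pos (hw_pos i0)
    have key : ‖μ‖ * z i0 ≤ b * z i0 := by
      have e1 : ‖μ‖ * z i0 = ‖((Qmat E).map Complex.ofReal).mulVec v i0‖ := by
        rw [hv]
        simp [hzdef, _root_.map_mul]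
      have e2 : ‖((Qmat E).map Complex.ofReal).mulVec v i0‖
          ≤ ∑ j, Qmat E i0 j * z j := by
        simp only [Matrix.mulVec, dotProduct]
        refine (norm_sum_le _ _).trans (Finset.sum_le_sum fun j _ => ?_)
        rw [Matrix.map_apply, norm_mul, Complex.norm_real, Real.norm_eq_abs,
          abs_of_nonneg (Qmat_nonneg E i0 j)]
      have e3 : ∑ j, Qmat E i0 j * z j ≤ ∑ j, Qmat E i0 j * (r * w j) :=
        Finset.sum_le_sum fun j _ =>
          mul_le_mul_of_nonneg_left (hz_le j) (Qmat_nonneg E i0 j)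
      have e4 : ∑ j, Qmat E i0 j * (r * w j) = r * ∑ j, Qmat E i0 j * w j := by
        rw [Finset.mul_sum]
        exact Finset.sum_congr rfl fun j _ => by ring
      have e5 : r * ∑ j, Qmat E i0 j * w j ≤ r * (b * w i0) :=
        mul_le_mul_of_nonneg_left (hQw i0) hr_nonneg
      calc ‖μ‖ * z i0 = _ := e1
        _ ≤ _ := e2
        _ ≤ _ := e3
        _ = _ := e4
        _ ≤ r * (b * w i0) := e5
        _ = b * z i0 := by rw [hzi0]; ring
    exact le_of_mul_le_mul_right key hzi0_pos
  -- conclude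
  rw [qG, specRadR, specRad]
  refine Real.sSup_le ?_ hb_nonneg
  rintro x ⟨μ, hμ, rfl⟩
  exact hEig μ hμ
end

section
/- Let G be a digraph with at least one arc in which every vertex has positive outdegree. Then q(G) ≤ max over arcs (v_i,v_j) of ( d_i^+(sqrt(d_i^+) + sqrt(m_i^+)) + d_j^+(sqrt(d_j^+) + sqrt(m_j^+)) ) / ( sqrt(d_i^+) + sqrt(d_j^+) ). -/
open Matrix Finset

-- row equation
lemma rowEq {n : ℕ} (E : Fin n → Fin n → Prop) [DecidableRel E]
    (hloop : ∀ i, ¬ E i i) {μ : ℂ} {v : Fin n → ℂ}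
    (hev : ((Qmat E).map Complex.ofReal) *ᵥ v = μ • v) (i : Fin n) :
    μ * v i = ∑ k ∈ Finset.univ.filter (fun j => E i j), (v i + v k) := by
  have h := congrFun hev i
  simp only [Matrix.mulVec, dotProduct, Pi.smul_apply, smul_eq_mul,
    Matrix.map_apply, Qmat, Matrix.add_apply, Matrix.diagonal_apply, adjM] at h
  rw [Finset.sum_add_distrib, Finset.sum_const, nsmul_eq_mul]
  have h1 : ∀ j : Fin n,
      (Complex.ofReal ((if i = j then ((outdeg E i : ℝ)) else 0) + if E i j then 1 else 0)) * v j
      = (if i = j then ((outdeg E i : ℂ)) else 0) * v j + (if E i j then v j else 0) := by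
    intro j
    by_cases hij : i = j <;> by_cases hE : E i j <;> simp [hij, hE, hloop]
  rw [Finset.sum_congr rfl (fun j _ => h1 j)] at h
  rw [Finset.sum_add_distrib] at h
  simp only [ite_mul, zero_mul, Finset.sum_ite_eq, Finset.mem_univ, if_true] at h
  rw [← Finset.sum_filter] at h
  rw [← h, outdeg]

lemma sumSqrtLe {n : ℕ} (E : Fin n → Fin n → Prop) [DecidableRel E]
    (hdeg : ∀ i, 0 < outdeg E i) (i : Fin n) :
    ∑ k ∈ Finset.univ.filter (fun j => E i j), Real.sqrt (outdeg E k)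
      ≤ (outdeg E i : ℝ) * Real.sqrt (m2 E i) := by
  set s := Finset.univ.filter (fun j => E i j)
  set S := ∑ k ∈ s, Real.sqrt (outdeg E k) with hSdef
  have hS0 : 0 ≤ S := Finset.sum_nonneg fun k _ => Real.sqrt_nonneg _
  have hdi : (0:ℝ) < (outdeg E i : ℝ) := by exact_mod_cast hdeg i
  have hsum : ∑ k ∈ s, ((outdeg E k : ℝ)) = (outdeg E i : ℝ) * m2 E i := by
    rw [m2]; field_simp; rfl
  have h2 : S ^ 2 ≤ ((outdeg E i : ℝ)) ^ 2 * m2 E i := by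
    have := Finset.sum_mul_sq_le_sq_mul_sq s (fun _ => (1:ℝ)) (fun k => Real.sqrt (outdeg E k))
    simp only [one_mul, one_pow, Finset.sum_const, nsmul_eq_mul, mul_one] at this
    calc S ^ 2 ≤ (s.card : ℝ) * ∑ k ∈ s, Real.sqrt (outdeg E k) ^ 2 := this
      _ = (outdeg E i : ℝ) * ∑ k ∈ s, ((outdeg E k : ℝ)) := by
          rw [Finset.sum_congr rfl fun k _ => Real.sq_sqrt (by positivity)]; rfl
      _ = ((outdeg E i : ℝ)) ^ 2 * m2 E i := by rw [hsum]; ring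
  have h3 := Real.sqrt_le_sqrt h2
  rwa [Real.sqrt_sq hS0, Real.sqrt_mul (by positivity), Real.sqrt_sq hdi.le] at h3

theorem stmt_12' {n : ℕ} (E : Fin n → Fin n → Prop) [DecidableRel E]
    (hloop : ∀ i, ¬ E i i) (hdeg : ∀ i, 0 < outdeg E i) (harcs : (arcs E).Nonempty) :
    sSup {x : ℝ | ∃ μ ∈ spectrum ℂ ((Qmat E).map Complex.ofReal), x = ‖μ‖}
      ≤ (arcs E).sup' harcs (fun p =>
      ((outdeg E p.1 : ℝ) * (Real.sqrt (outdeg E p.1 : ℝ) + Real.sqrt (m2 E p.1)) +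
       (outdeg E p.2 : ℝ) * (Real.sqrt (outdeg E p.2 : ℝ) + Real.sqrt (m2 E p.2))) /
        (Real.sqrt (outdeg E p.1 : ℝ) + Real.sqrt (outdeg E p.2 : ℝ))) := by
  set c : Fin n → ℝ := fun i => Real.sqrt (outdeg E i) with hc
  have hcpos : ∀ i, 0 < c i := fun i => Real.sqrt_pos.2 (by exact_mod_cast hdeg i)
  set F : Fin n × Fin n → ℝ := fun p =>
      ((outdeg E p.1 : ℝ) * (Real.sqrt (outdeg E p.1 : ℝ) + Real.sqrt (m2 E p.1)) +
       (outdeg E p.2 : ℝ) * (Real.sqrt (outdeg E p.2 : ℝ) + Real.sqrt (m2 E p.2))) /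
        (Real.sqrt (outdeg E p.1 : ℝ) + Real.sqrt (outdeg E p.2 : ℝ)) with hF
  have hF0 : ∀ p, 0 ≤ F p := by
    intro p
    have := Real.sqrt_nonneg (m2 E p.1)
    have := Real.sqrt_nonneg (m2 E p.2)
    have := (hcpos p.1)
    have := (hcpos p.2)
    apply div_nonneg <;> positivity
  have hB0 : 0 ≤ (arcs E).sup' harcs F :=
    le_trans (hF0 harcs.choose) (Finset.le_sup' F harcs.choose_spec)
  apply Real.sSup_le _ hB0
  rintro x ⟨μ, hμ, rfl⟩
  -- extract eigenvector
  have hnu : ¬ IsUnit ((algebraMap ℂ (Matrix (Fin n) (Fin n) ℂ)) μ - (Qmat E).map Complex.ofReal) :=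
    spectrum.mem_iff.mp hμ
  have hdet : ((algebraMap ℂ (Matrix (Fin n) (Fin n) ℂ)) μ - (Qmat E).map Complex.ofReal).det = 0 := by
    by_contra h
    exact hnu ((Matrix.isUnit_iff_isUnit_det _).2 (Ne.isUnit h))
  obtain ⟨v, hv0, hv⟩ := Matrix.exists_mulVec_eq_zero_iff.2 hdet
  have hev : ((Qmat E).map Complex.ofReal) *ᵥ v = μ • v := by
    have h1 : ((algebraMap ℂ (Matrix (Fin n) (Fin n) ℂ)) μ) *ᵥ v = μ • v := by
      rw [Algebra.algebraMap_eq_smul_one, Matrix.smul_mulVec, Matrix.one_mulVec]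
    rw [Matrix.sub_mulVec, h1, sub_eq_zero] at hv
    exact hv.symm
  have hrow := rowEq E hloop hev
  by_cases hall : ∀ p ∈ arcs E, v p.1 + v p.2 = 0
  · -- all arc-sums vanish, so μ = 0
    have hμ0 : μ = 0 := by
      obtain ⟨i, hi⟩ := Function.ne_iff.mp hv0
      have h0 : μ * v i = 0 := by
        rw [hrow i]
        apply Finset.sum_eq_zero
        intro k hk
        exact hall (i, k) (by simpa [arcs] using (Finset.mem_filter.mp hk).2)
      rcases mul_eq_zero.mp h0 with h | h
      · exact h
      · exact absurd h hi
    simpa [hμ0] using hB0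
  · -- main case
    push_neg at hall
    obtain ⟨p0, hp0, hz0⟩ := hall
    set g : Fin n × Fin n → ℝ := fun p => ‖v p.1 + v p.2‖ / (c p.1 + c p.2) with hg
    obtain ⟨p, hp, hmax⟩ := (arcs E).exists_max_image g harcs
    have hfpos : ∀ q : Fin n × Fin n, 0 < c q.1 + c q.2 := fun q => by
      have := hcpos q.1; have := hcpos q.2; linarith
    have hw : 0 < g p := by
      refine lt_of_lt_of_le ?_ (hmax p0 hp0)
      exact div_pos (by simpa using hz0) (hfpos p0)
    have hEp : E p.1 p.2 := by simpa [arcs] using hp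
    -- key inequality
    have hzabs : ∀ q ∈ arcs E, ‖v q.1 + v q.2‖ ≤ g p * (c q.1 + c q.2) := by
      intro q hq
      have := hmax q hq
      rw [hg] at this
      calc ‖v q.1 + v q.2‖
          = (‖v q.1 + v q.2‖ / (c q.1 + c q.2)) * (c q.1 + c q.2) :=
            (div_mul_cancel₀ _ (hfpos q).ne').symm
        _ ≤ g p * (c q.1 + c q.2) := by
            apply mul_le_mul_of_nonneg_right this (hfpos q).le
    have bnd : ∀ i : Fin n,
        ‖∑ k ∈ Finset.univ.filter (fun j => E i j), (v i + v k)‖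
          ≤ g p * ((outdeg E i : ℝ) * c i + ∑ k ∈ Finset.univ.filter (fun j => E i j), c k) := by
      intro i
      refine le_trans (norm_sum_le _ _) ?_
      have h1 : ∑ k ∈ Finset.univ.filter (fun j => E i j), ‖v i + v k‖
          ≤ ∑ k ∈ Finset.univ.filter (fun j => E i j), g p * (c i + c k) := by
        refine Finset.sum_le_sum fun k hk => ?_
        exact hzabs (i, k) (by simpa [arcs] using (Finset.mem_filter.mp hk).2)
      refine le_trans h1 (le_of_eq ?_)
      rw [← Finset.mul_sum, Finset.sum_add_distrib, Finset.sum_const, nsmul_eq_mul, outdeg]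
    have hkey : ‖μ‖ * (c p.1 + c p.2) ≤
        ((outdeg E p.1 : ℝ) * c p.1 + ∑ k ∈ Finset.univ.filter (fun j => E p.1 j), c k) +
        ((outdeg E p.2 : ℝ) * c p.2 + ∑ k ∈ Finset.univ.filter (fun j => E p.2 j), c k) := by
      have heq : μ * (v p.1 + v p.2)
          = (∑ k ∈ Finset.univ.filter (fun j => E p.1 j), (v p.1 + v k))
          + (∑ k ∈ Finset.univ.filter (fun j => E p.2 j), (v p.2 + v k)) := by
        rw [mul_add, hrow p.1, hrow p.2]
      have hzp : ‖v p.1 + v p.2‖ = g p * (c p.1 + c p.2) := by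
        rw [hg]; exact (div_mul_cancel₀ _ (hfpos p).ne').symm
      have habs : ‖μ‖ * (g p * (c p.1 + c p.2)) ≤
          g p * (((outdeg E p.1 : ℝ) * c p.1 + ∑ k ∈ Finset.univ.filter (fun j => E p.1 j), c k) +
           ((outdeg E p.2 : ℝ) * c p.2 + ∑ k ∈ Finset.univ.filter (fun j => E p.2 j), c k)) := by
        rw [← hzp, ← norm_mul, heq]
        refine le_trans (norm_add_le _ _) ?_
        rw [mul_add]
        exact add_le_add (bnd p.1) (bnd p.2)
      have := habs
      rw [show ‖μ‖ * (g p * (c p.1 + c p.2)) = g p * (‖μ‖ * (c p.1 + c p.2)) by ring] at this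
      exact le_of_mul_le_mul_left this hw
    -- finish via Cauchy-Schwarz bound
    have hnum : ((outdeg E p.1 : ℝ) * c p.1 + ∑ k ∈ Finset.univ.filter (fun j => E p.1 j), c k) +
        ((outdeg E p.2 : ℝ) * c p.2 + ∑ k ∈ Finset.univ.filter (fun j => E p.2 j), c k)
        ≤ ((outdeg E p.1 : ℝ) * (Real.sqrt (outdeg E p.1 : ℝ) + Real.sqrt (m2 E p.1)) +
       (outdeg E p.2 : ℝ) * (Real.sqrt (outdeg E p.2 : ℝ) + Real.sqrt (m2 E p.2))) := by
      have h1 := sumSqrtLe E hdeg p.1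
      have h2 := sumSqrtLe E hdeg p.2
      simp only [hc]
      nlinarith [h1, h2]
    have hμF : ‖μ‖ ≤ F p := by
      rw [hF]
      rw [le_div_iff₀ (hfpos p)]
      exact le_trans hkey hnum
    exact le_trans hμF (Finset.le_sup' F hp)

/-- `q(G) ≤ max over arcs of
(d_i⁺(√d_i⁺+√m_i⁺)+d_j⁺(√d_j⁺+√m_j⁺))/(√d_i⁺+√d_j⁺)`. -/
theorem stmt_12 {n : ℕ} (E : Fin n → Fin n → Prop) [DecidableRel E]
    (hloop : ∀ i, ¬ E i i) (hdeg : ∀ i, 0 < outdeg E i) (harcs : (arcs E).Nonempty) :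
    qG E ≤ (arcs E).sup' harcs (fun p =>
      ((outdeg E p.1 : ℝ) * (Real.sqrt (outdeg E p.1 : ℝ) + Real.sqrt (m2 E p.1)) +
       (outdeg E p.2 : ℝ) * (Real.sqrt (outdeg E p.2 : ℝ) + Real.sqrt (m2 E p.2))) /
        (Real.sqrt (outdeg E p.1 : ℝ) + Real.sqrt (outdeg E p.2 : ℝ))) := by
  exact stmt_12' E hloop hdeg harcs
end

section
/- Let K↔_{1,n−1} be the digraph on n ≥ 2 vertices obtained from the star K_{1,n−1} by replacing each edge with two oppositely directed arcs. Then q(K↔_{1,n−1}) = n. -/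
open Matrix Finset

/-- The arcs of the bidirected star on `n` vertices with center the vertex `0`. -/
def starE (n : ℕ) (i j : Fin n) : Prop :=
  (i.val = 0 ∧ j.val ≠ 0) ∨ (i.val ≠ 0 ∧ j.val = 0)

instance (n : ℕ) : DecidableRel (starE n) := fun i j => by
  unfold starE; infer_instance

open Polynomial

section aux

variable {n : ℕ}

lemma vmv_mul (v w x y : Fin n → ℂ) :
    vecMulVec v w * vecMulVec x y = (w ⬝ᵥ x) • vecMulVec v y := by
  ext i j
  simp only [mul_apply, vecMulVec_apply, Matrix.smul_apply, smul_eq_mul, dotProduct, Finset.sum_mul]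
  exact Finset.sum_congr rfl fun k _ => by ring

lemma vmv_mulVec (v w x : Fin n → ℂ) :
    (vecMulVec v w) *ᵥ x = (w ⬝ᵥ x) • v := by
  ext i
  simp only [mulVec, dotProduct, vecMulVec_apply, Pi.smul_apply, smul_eq_mul, Finset.sum_mul]
  exact Finset.sum_congr rfl fun k _ => by ring

end aux


/-- `q(K↔_{1,n−1}) = n`. -/
theorem stmt_15 (n : ℕ) (hn : 2 ≤ n) : qG (starE n) = (n : ℝ) := by
  haveI : NeZero n := ⟨by omega⟩
  have hout0 : outdeg (starE n) 0 = n - 1 := by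
    unfold outdeg
    have : (univ.filter (fun j => starE n 0 j)) = univ.erase 0 := by
      ext j
      simp [starE]
    rw [this, card_erase_of_mem (mem_univ _), card_univ, Fintype.card_fin]
  have houti : ∀ i : Fin n, i ≠ 0 → outdeg (starE n) i = 1 := by
    intro i hi
    have hi2 : (i : ℕ) ≠ 0 := fun h => hi (Fin.ext (by rw [h]; simp))
    unfold outdeg
    have : (univ.filter (fun j => starE n i j)) = {0} := by
      ext j
      simp [starE, hi2]
    rw [this, card_singleton]
  set e : Fin n → ℂ := fun i => if i = 0 then 1 else 0 with he
  set w : Fin n → ℂ := fun i => if i = 0 then 0 else 1 with hw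
  set M : Matrix (Fin n) (Fin n) ℂ := (Qmat (starE n)).map Complex.ofReal with hMdef
  -- dot products
  have hee : e ⬝ᵥ e = 1 := by simp [dotProduct, he, ite_mul, Finset.sum_ite_eq']
  have hew : e ⬝ᵥ w = 0 := by
    rw [dotProduct]
    apply Finset.sum_eq_zero
    intro k _; by_cases hk : k = 0 <;> simp [he, hw, hk]
  have hwe : w ⬝ᵥ e = 0 := by
    rw [dotProduct]
    apply Finset.sum_eq_zero
    intro k _; by_cases hk : k = 0 <;> simp [he, hw, hk]
  have hww : w ⬝ᵥ w = (n : ℂ) - 1 := by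
    have hterm : ∀ k : Fin n, w k * w k = 1 - (if k = 0 then (1:ℂ) else 0) := by
      intro k; by_cases hk : k = 0 <;> simp [hw, hk]
    simp [dotProduct, hterm, Finset.sum_sub_distrib, Finset.sum_ite_eq']
  -- structural decomposition
  have hM : M = 1 + ((n : ℂ) - 2) • vecMulVec e e + vecMulVec e w + vecMulVec w e := by
    ext i j
    by_cases hi : i = 0 <;> by_cases hj : j = 0
    · subst hi; subst hj
      simp [hMdef, Qmat, adjM, starE, diagonal, hout0, he, hw, vecMulVec_apply,
        Nat.cast_sub (by omega : 1 ≤ n)]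
      ring
    · subst hi
      have hj2 : (j : ℕ) ≠ 0 := fun h => hj (Fin.ext (by rw [h]; simp))
      simp [hMdef, Qmat, adjM, starE, diagonal, Ne.symm hj, hj2, he, hw, hj, vecMulVec_apply]
    · subst hj
      have hi2 : (i : ℕ) ≠ 0 := fun h => hi (Fin.ext (by rw [h]; simp))
      simp [hMdef, Qmat, adjM, starE, diagonal, hi, hi2, he, hw, vecMulVec_apply]
    · have hi2 : (i : ℕ) ≠ 0 := fun h => hi (Fin.ext (by rw [h]; simp))
      have hj2 : (j : ℕ) ≠ 0 := fun h => hj (Fin.ext (by rw [h]; simp))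
      by_cases hij : i = j <;>
        simp [hMdef, Qmat, adjM, starE, diagonal, hi, hj, hi2, hj2, hij, he, hw,
          vecMulVec_apply, houti i hi, houti j hj]
  set P := vecMulVec e e with hP
  set R := vecMulVec e w with hR
  set S := vecMulVec w e with hS
  set T := vecMulVec w w with hT
  have hPP : P * P = P := by rw [hP, vmv_mul, hee, one_smul]
  have hPR : P * R = R := by rw [hP, hR, vmv_mul, hee, one_smul]
  have hPS : P * S = 0 := by rw [hP, hS, vmv_mul, hew, zero_smul]
  have hPT : P * T = 0 := by rw [hP, hT, vmv_mul, hew, zero_smul]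
  have hRP : R * P = 0 := by rw [hP, hR, vmv_mul, hwe, zero_smul]
  have hRR : R * R = 0 := by rw [hR, vmv_mul, hwe, zero_smul]
  have hRS : R * S = ((n : ℂ) - 1) • P := by rw [hP, hR, hS, vmv_mul, hww]
  have hRT : R * T = ((n : ℂ) - 1) • R := by rw [hR, hT, vmv_mul, hww]
  have hSP : S * P = S := by rw [hP, hS, vmv_mul, hee, one_smul]
  have hSR : S * R = T := by rw [hT, hS, hR, vmv_mul, hee, one_smul]
  have hSS : S * S = 0 := by rw [hS, vmv_mul, hew, zero_smul]
  have hST : S * T = 0 := by rw [hS, hT, vmv_mul, hew, zero_smul]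
  have hTP : T * P = 0 := by rw [hT, hP, vmv_mul, hwe, zero_smul]
  have hTR : T * R = 0 := by rw [hT, hR, vmv_mul, hwe, zero_smul]
  have hTS : T * S = ((n : ℂ) - 1) • S := by rw [hT, hS, vmv_mul, hww]
  have hTT : T * T = ((n : ℂ) - 1) • T := by rw [hT, vmv_mul, hww]
  -- the cubic identity
  have key : M * (M - 1) * (M - (n : ℂ) • 1) = 0 := by
    rw [hM]
    have expand : (1 + ((n : ℂ) - 2) • P + R + S - 1) = ((n : ℂ) - 2) • P + R + S := by abel
    rw [expand]
    simp only [mul_add, add_mul, mul_sub, sub_mul, smul_mul_assoc, mul_smul_comm, one_mul,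
      mul_one, hPP, hPR, hPS, hPT, hRP, hRR, hRS, hRT, hSP, hSR, hSS, hST, hTP, hTR, hTS, hTT,
      smul_zero, add_zero, zero_add, smul_smul, smul_add]
    match_scalars <;> ring
  -- every spectral value is 0, 1, or n
  have hspec_sub : ∀ μ ∈ spectrum ℂ M, μ = 0 ∨ μ = 1 ∨ μ = (n : ℂ) := by
    intro μ hμ
    set p : ℂ[X] := X * (X - C 1) * (X - C (n : ℂ)) with hp
    have haeval : aeval M p = 0 := by
      rw [hp]
      simp only [_root_.map_mul, map_sub, aeval_X, aeval_C, Algebra.algebraMap_eq_smul_one, one_smul]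
      exact key
    have hmemb : eval μ p ∈ spectrum ℂ (aeval M p) :=
      spectrum.subset_polynomial_aeval M p ⟨μ, hμ, rfl⟩
    rw [haeval, spectrum.zero_eq] at hmemb
    have h0 : μ * (μ - 1) * (μ - (n : ℂ)) = 0 := by simpa [hp] using hmemb
    rcases mul_eq_zero.mp h0 with h | h
    · rcases mul_eq_zero.mp h with h | h
      · exact Or.inl h
      · exact Or.inr (Or.inl (by linear_combination h))
    · exact Or.inr (Or.inr (by linear_combination h))
  -- n is in the spectrum
  set v : Fin n → ℂ := ((n : ℂ) - 1) • e + w with hv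
  have hv0 : v ≠ 0 := by
    intro h
    have h0 := congrFun h 0
    simp [hv, he, hw] at h0
    have : (n : ℂ) = 1 := by linear_combination h0
    have : (n : ℕ) = 1 := by exact_mod_cast this
    omega
  have hMv : M *ᵥ v = (n : ℂ) • v := by
    rw [hM]
    simp only [add_mulVec, one_mulVec, smul_mulVec, hP, hR, hS, vmv_mulVec]
    rw [hv]
    simp only [dotProduct_add, dotProduct_smul, hee, hew, hwe, hww, smul_eq_mul]
    match_scalars <;> ring
  have hn_spec : (n : ℂ) ∈ spectrum ℂ M := by
    rw [spectrum.mem_iff]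
    intro hunit
    have hdet : IsUnit (algebraMap ℂ (Matrix (Fin n) (Fin n) ℂ) (n : ℂ) - M).det :=
      (Matrix.isUnit_iff_isUnit_det _).mp hunit
    rw [isUnit_iff_ne_zero] at hdet
    apply hdet
    rw [← Matrix.exists_mulVec_eq_zero_iff]
    refine ⟨v, hv0, ?_⟩
    rw [sub_mulVec, hMv, Algebra.algebraMap_eq_smul_one, smul_mulVec, one_mulVec, sub_self]
  -- conclude
  have hub : ∀ x ∈ {x : ℝ | ∃ μ ∈ spectrum ℂ M, x = ‖μ‖}, x ≤ (n : ℝ) := by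
    rintro x ⟨μ, hμ, rfl⟩
    rcases hspec_sub μ hμ with h | h | h <;> subst h
    · simp
    · simpa using (by exact_mod_cast (by omega : 1 ≤ n) : (1 : ℝ) ≤ (n : ℝ))
    · simp
  have hmem : (n : ℝ) ∈ {x : ℝ | ∃ μ ∈ spectrum ℂ M, x = ‖μ‖} :=
    ⟨(n : ℂ), hn_spec, by simp⟩
  show sSup {x : ℝ | ∃ μ ∈ spectrum ℂ M, x = ‖μ‖} = (n : ℝ)
  exact le_antisymm (csSup_le ⟨_, hmem⟩ hub) (le_csSup ⟨_, hub⟩ hmem)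
end

section
/- Let G be a strongly connected digraph with n vertices, m arcs, minimum outdegree δ⁺, and let u be a vertex with outdegree d_u^+ ≥ 2. Then the average 2-outdegree satisfies m_u^+ ≤ (m − (n−1)δ⁺)/d_u^+ + δ⁺ − 1. -/
open Matrix Finset

/-- for a vertex `u` with `d_u⁺ ≥ 2`,
`m_u⁺ ≤ (m − (n−1)δ⁺)/d_u⁺ + δ⁺ − 1`. -/
theorem stmt_17 {n : ℕ} (E : Fin n → Fin n → Prop) [DecidableRel E]
    (hloop : ∀ i, ¬ E i i) (hsc : StrongConn E)
    (m δ : ℕ) (hm : m = ∑ i, outdeg E i)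
    (hδ : IsLeast (Set.range (outdeg E)) δ)
    (u : Fin n) (hu : 2 ≤ outdeg E u) :
    m2 E u ≤ ((m : ℝ) - ((n : ℝ) - 1) * δ) / (outdeg E u : ℝ) + (δ : ℝ) - 1 := by
  classical
  set N := Finset.univ.filter (fun j => E u j) with hN
  set d := outdeg E u with hd
  have huN : u ∉ N := by simp [hN, hloop u]
  have hdcard : d = N.card := rfl
  have hT : (insert u N).card = d + 1 := by
    rw [Finset.card_insert_of_notMem huN]; omega
  have hdn : d + 1 ≤ n := by
    have := Finset.card_le_univ (insert u N)
    simpa [hT, Fintype.card_fin] using this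
  set S := ∑ j ∈ N, outdeg E j with hS
  -- key natural-number inequality
  have key : S + d + (n - (d + 1)) * δ ≤ m := by
    have hsplit : ∑ i ∈ (insert u N), outdeg E i
        + ∑ i ∈ (insert u N)ᶜ, outdeg E i = m := by
      rw [hm, ← Finset.sum_add_sum_compl (insert u N)]
    have h1 : ∑ i ∈ (insert u N), outdeg E i = d + S := by
      rw [Finset.sum_insert huN]
    have h2 : (n - (d + 1)) * δ ≤ ∑ i ∈ (insert u N)ᶜ, outdeg E i := by
      have hc : (insert u N)ᶜ.card = n - (d + 1) := by
        rw [Finset.card_compl, hT, Fintype.card_fin]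
      calc (n - (d+1)) * δ = ∑ _i ∈ (insert u N)ᶜ, δ := by
            rw [Finset.sum_const, hc, smul_eq_mul]
        _ ≤ ∑ i ∈ (insert u N)ᶜ, outdeg E i :=
            Finset.sum_le_sum (fun i _ => hδ.2 ⟨i, rfl⟩)
    omega
  -- move to reals
  have hdpos : (0:ℝ) < (d:ℝ) := by exact_mod_cast (by omega : 0 < d)
  have hkeyR : (S:ℝ) + d + ((n:ℝ) - (d+1)) * δ ≤ m := by
    have : ((S + d + (n - (d+1)) * δ : ℕ) : ℝ) ≤ (m:ℝ) := by exact_mod_cast key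
    push_cast [Nat.sub_add_cancel, Nat.cast_sub hdn] at this
    linarith
  have hm2 : m2 E u = (S:ℝ) / d := by
    simp [m2, hS, hN, hd]
  rw [hm2, div_add' _ _ _ (ne_of_gt hdpos), div_sub' (ne_of_gt hdpos),
    div_le_div_iff₀ hdpos hdpos]
  ring_nf
  nlinarith [hkeyR]
end
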